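/- arXiv:1801.06973 — 10 statements merged into one kernel-verified Lean document; each statement's English description precedes it below -/
import Mathlib

section
/- Let α > 0, h > 0, and let i be a natural number. Let S_i be the i-th sample-and-hold function of step h, and let J^α denote the Riemann–Liouville fractional integral of order α. Then for every t ≥ 0: (i) if 0 ≤ t ≤ i·h then J^α S_i(t) = 0; (ii) if i·h ≤ t ≤ (i+1)·h then J^α S_i(t) = (t − i·h)^α / Γ(α+1); (iii) if t ≥ (i+1)·h then J^α S_i(t) = ((t − i·h)^α − (t − (i+1)·h)^α) / Γ(α+1). -/
open MeasureTheory Real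

/-- The `i`-th sample-and-hold function (SHF) of step `h`:
`S_i(t) = 1` on `[i·h, (i+1)·h)` and `0` otherwise. -/
noncomputable def shf (h : ℝ) (i : ℕ) (t : ℝ) : ℝ :=
  if (i : ℝ) * h ≤ t ∧ t < ((i : ℝ) + 1) * h then 1 else 0

/-- The `i`-th right-handed triangular function (TF) of step `h`:
`T_i(t) = (t − i·h)/h` on `[i·h, (i+1)·h)` and `0` otherwise. -/
noncomputable def tf (h : ℝ) (i : ℕ) (t : ℝ) : ℝ :=
  if (i : ℝ) * h ≤ t ∧ t < ((i : ℝ) + 1) * h then (t - (i : ℝ) * h) / h else 0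

/-- Riemann–Liouville fractional integral of order `α`:
`J^α f(t) = (1/Γ(α)) ∫₀ᵗ (t − τ)^{α−1} f(τ) dτ`. -/
noncomputable def rlInt (α : ℝ) (f : ℝ → ℝ) (t : ℝ) : ℝ :=
  (1 / Real.Gamma α) * ∫ τ in (0:ℝ)..t, (t - τ) ^ (α - 1) * f τ
lemma aux_ae_ne_two (p q : ℝ) :
    ∀ᵐ τ : ℝ ∂volume, τ ≠ p ∧ τ ≠ q := by
  have h1 : (volume : Measure ℝ) {p} = 0 := measure_singleton p
  have h2 : (volume : Measure ℝ) {q} = 0 := measure_singleton q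
  have := measure_union_null h1 h2
  rw [ae_iff]
  refine measure_mono_null ?_ this
  intro x hx
  simp only [Set.mem_setOf_eq, not_and_or, not_not] at hx
  rcases hx with h | h <;> simp [h]

lemma aux_kernel_II (α t : ℝ) (hα : 0 < α) (a b : ℝ) :
    IntervalIntegrable (fun τ => (t - τ) ^ (α - 1)) volume a b := by
  have := (intervalIntegral.intervalIntegrable_rpow' (a := t - a) (b := t - b)
    (show (-1:ℝ) < α - 1 by linarith)).comp_sub_left t
  simpa using this

lemma aux_kernel_integral (α t : ℝ) (hα : 0 < α) (a b : ℝ) :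
    ∫ τ in a..b, (t - τ) ^ (α - 1) = ((t - a) ^ α - (t - b) ^ α) / α := by
  rw [intervalIntegral.integral_comp_sub_left (fun x => x ^ (α - 1)) t,
    integral_rpow (Or.inl (by linarith))]
  rw [sub_add_cancel]

/-- Explicit piecewise formula for `J^α S_i`. -/
theorem rlInt_shf_piecewise (α h : ℝ) (hα : 0 < α) (hh : 0 < h) (i : ℕ) (t : ℝ)
    (ht : 0 ≤ t) :
    (t ≤ (i : ℝ) * h → rlInt α (shf h i) t = 0) ∧
    ((i : ℝ) * h ≤ t → t ≤ ((i : ℝ) + 1) * h →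
      rlInt α (shf h i) t = (t - (i : ℝ) * h) ^ α / Real.Gamma (α + 1)) ∧
    (((i : ℝ) + 1) * h ≤ t →
      rlInt α (shf h i) t =
        ((t - (i : ℝ) * h) ^ α - (t - ((i : ℝ) + 1) * h) ^ α) / Real.Gamma (α + 1)) := by
  set a := (i : ℝ) * h with ha_def
  set b := ((i : ℝ) + 1) * h with hb_def
  have ha0 : 0 ≤ a := by positivity
  have hab : a < b := by
    rw [ha_def, hb_def]; nlinarith
  have hΓ : Real.Gamma (α + 1) = α * Real.Gamma α := Real.Gamma_add_one hα.ne'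
  have hΓpos : 0 < Real.Gamma α := Real.Gamma_pos_of_pos hα
  set f : ℝ → ℝ := fun τ => (t - τ) ^ (α - 1) * shf h i τ with hf_def
  -- a.e. descriptions of f on subintervals
  have key0lo : ∀ c d : ℝ, c ≤ d → d ≤ a →
      ∀ᵐ τ : ℝ ∂volume, τ ∈ Set.uIoc c d → f τ = 0 := by
    intro c d hcd hda
    filter_upwards [aux_ae_ne_two a b] with τ hτ hmem
    rw [Set.uIoc_of_le hcd] at hmem
    have : τ < a := lt_of_le_of_ne (hmem.2.trans hda) hτ.1
    simp only [hf_def, shf, ha_def]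
    rw [if_neg (by rw [← ha_def]; exact fun hc => absurd hc.1 (not_le.2 this))]
    ring
  have key1 : ∀ c d : ℝ, c ≤ d → a ≤ c → d ≤ b →
      ∀ᵐ τ : ℝ ∂volume, τ ∈ Set.uIoc c d → f τ = (t - τ) ^ (α - 1) := by
    intro c d hcd hac hdb
    filter_upwards [aux_ae_ne_two a b] with τ hτ hmem
    rw [Set.uIoc_of_le hcd] at hmem
    have h1 : a ≤ τ := le_of_lt (lt_of_le_of_lt hac hmem.1)
    have h2 : τ < b := lt_of_le_of_ne (hmem.2.trans hdb) hτ.2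
    simp only [hf_def, shf]
    rw [if_pos ⟨by rw [← ha_def]; exact h1, by rw [← hb_def]; exact h2⟩]
    ring
  have key0hi : ∀ c d : ℝ, c ≤ d → b ≤ c →
      ∀ᵐ τ : ℝ ∂volume, τ ∈ Set.uIoc c d → f τ = 0 := by
    intro c d hcd hbc
    filter_upwards [aux_ae_ne_two a b] with τ hτ hmem
    rw [Set.uIoc_of_le hcd] at hmem
    have : ¬ τ < b := not_lt.2 (le_of_lt (lt_of_le_of_lt hbc hmem.1))
    simp only [hf_def, shf]
    rw [if_neg (by rw [← hb_def]; exact fun hc => absurd hc.2 this)]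
    ring
  -- integrability
  have II_of_ae0 : ∀ c d : ℝ,
      (∀ᵐ τ : ℝ ∂volume, τ ∈ Set.uIoc c d → f τ = 0) →
      IntervalIntegrable f volume c d := by
    intro c d hae
    refine (intervalIntegrable_const (c := (0:ℝ))).congr_ae ?_
    exact ((ae_restrict_iff' measurableSet_uIoc).2 (hae.mono fun τ hτ hm => (hτ hm).symm))
  have II_of_ae1 : ∀ c d : ℝ,
      (∀ᵐ τ : ℝ ∂volume, τ ∈ Set.uIoc c d → f τ = (t - τ) ^ (α - 1)) →
      IntervalIntegrable f volume c d := by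
    intro c d hae
    refine (aux_kernel_II α t hα c d).congr_ae ?_
    exact ((ae_restrict_iff' measurableSet_uIoc).2 (hae.mono fun τ hτ hm => (hτ hm).symm))
  refine ⟨?_, ?_, ?_⟩
  · -- t ≤ a
    intro hta
    have := key0lo 0 t ht hta
    rw [rlInt, ← hf_def, intervalIntegral.integral_congr_ae this]
    simp
  · -- a ≤ t ≤ b
    intro hat htb
    have I1 : IntervalIntegrable f volume 0 a := II_of_ae0 0 a (key0lo 0 a ha0 le_rfl)
    have I2 : IntervalIntegrable f volume a t := II_of_ae1 a t (key1 a t hat le_rfl htb)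
    rw [rlInt, ← hf_def, ← intervalIntegral.integral_add_adjacent_intervals I1 I2,
      intervalIntegral.integral_congr_ae (key0lo 0 a ha0 le_rfl),
      intervalIntegral.integral_congr_ae (key1 a t hat le_rfl htb),
      aux_kernel_integral α t hα a t]
    rw [sub_self, Real.zero_rpow hα.ne', hΓ]
    simp only [intervalIntegral.integral_const, smul_zero, zero_add, sub_zero]
    field_simp
  · -- b ≤ t
    intro hbt
    have I1 : IntervalIntegrable f volume 0 a := II_of_ae0 0 a (key0lo 0 a ha0 le_rfl)
    have I2 : IntervalIntegrable f volume a b := II_of_ae1 a b (key1 a b hab.le le_rfl le_rfl)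
    have I3 : IntervalIntegrable f volume b t := II_of_ae0 b t (key0hi b t hbt le_rfl)
    have I12 : IntervalIntegrable f volume 0 b := I1.trans I2
    rw [rlInt, ← hf_def, ← intervalIntegral.integral_add_adjacent_intervals I12 I3,
      ← intervalIntegral.integral_add_adjacent_intervals I1 I2,
      intervalIntegral.integral_congr_ae (key0lo 0 a ha0 le_rfl),
      intervalIntegral.integral_congr_ae (key1 a b hab.le le_rfl le_rfl),
      intervalIntegral.integral_congr_ae (key0hi b t hbt le_rfl),
      aux_kernel_integral α t hα a b]
    simp only [intervalIntegral.integral_const, smul_zero, zero_add, add_zero]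
    rw [hΓ]
    field_simp
end

section
/- Let α > 0, h > 0, and let i, j be natural numbers. Let S_i be the i-th sample-and-hold function of step h. Then the Riemann–Liouville fractional integral of order α of S_i evaluated at the grid node t = j·h satisfies: J^α S_i(j·h) = (h^α / Γ(α+1)) · ((j−i)^α − (j−i−1)^α) whenever j ≥ i+1, and J^α S_i(j·h) = 0 whenever j ≤ i. (These are exactly the entries of the generalized one-shot operational matrix P_{αss} of Theorem 3.1.) -/
open MeasureTheory Real

/-- a.e. implication helper: if two functions agree on `Ι u v` off a single point,
then they agree a.e. on it. -/
lemma ae_imp_of_eq_off_pt {f g : ℝ → ℝ} {u v c : ℝ}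
    (hfg : ∀ x ∈ Set.uIoc u v, x ≠ c → f x = g x) :
    ∀ᵐ x ∂(volume : Measure ℝ), x ∈ Set.uIoc u v → f x = g x := by
  rw [ae_iff]
  refine measure_mono_null ?_ (measure_singleton c)
  intro x hx
  by_contra hxc
  exact hx (fun hm => hfg x hm hxc)

lemma ae_restrict_of_eq_off_pt {f g : ℝ → ℝ} {u v c : ℝ}
    (hfg : ∀ x ∈ Set.uIoc u v, x ≠ c → f x = g x) :
    f =ᵐ[volume.restrict (Set.uIoc u v)] g :=
  (ae_restrict_iff' measurableSet_uIoc).mpr (ae_imp_of_eq_off_pt hfg)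

/-- Nodal values of `J^α S_i`: the entries of the one-shot operational matrix `P_{αss}`. -/
theorem rlInt_shf_node (α h : ℝ) (hα : 0 < α) (hh : 0 < h) (i j : ℕ) :
    (i + 1 ≤ j →
      rlInt α (shf h i) ((j : ℝ) * h) =
        h ^ α / Real.Gamma (α + 1) * (((j : ℝ) - i) ^ α - ((j : ℝ) - i - 1) ^ α)) ∧
    (j ≤ i → rlInt α (shf h i) ((j : ℝ) * h) = 0) := by
  have hΓ : Real.Gamma α ≠ 0 := (Real.Gamma_pos_of_pos hα).ne'
  set T : ℝ := (j : ℝ) * h with hTdef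
  constructor
  · intro hij
    have hij' : (i : ℝ) + 1 ≤ (j : ℝ) := by exact_mod_cast hij
    set a : ℝ := (i : ℝ) * h with hadef
    set b : ℝ := ((i : ℝ) + 1) * h with hbdef
    have hia : (0:ℝ) ≤ (i:ℝ) := Nat.cast_nonneg i
    have h0a : (0:ℝ) ≤ a := by positivity
    have hab : a ≤ b := by rw [hadef, hbdef]; nlinarith
    have hbT : b ≤ T := by rw [hbdef, hTdef]; nlinarith
    set f : ℝ → ℝ := fun τ => (T - τ) ^ (α - 1) * shf h i τ with hfdef
    set g : ℝ → ℝ := fun τ => (T - τ) ^ (α - 1) with hgdef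
    have hg : ∀ u v : ℝ, IntervalIntegrable g volume u v := by
      intro u v
      have := (intervalIntegral.intervalIntegrable_rpow'
        (a := T - u) (b := T - v) (show (-1:ℝ) < α - 1 by linarith)).comp_sub_left T
      simpa [hgdef] using this
    -- zero off the support pieces
    have hz0a : ∀ x ∈ Set.uIoc (0:ℝ) a, x ≠ a → (0:ℝ) = f x := by
      intro x hx hxa
      rw [Set.uIoc_of_le h0a] at hx
      have hxlt : x < a := lt_of_le_of_ne hx.2 hxa
      simp only [hfdef, shf, hadef] at hxlt ⊢
      rw [if_neg (by intro hc; exact absurd hc.1 (not_le.mpr hxlt)), mul_zero]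
    have hzab : ∀ x ∈ Set.uIoc a b, x ≠ b → g x = f x := by
      intro x hx hxb
      rw [Set.uIoc_of_le hab] at hx
      have hxlt : x < b := lt_of_le_of_ne hx.2 hxb
      simp only [hfdef, hgdef, shf, hadef, hbdef] at hxlt ⊢
      rw [if_pos ⟨le_of_lt hx.1, hxlt⟩, mul_one]
    have hzbT : ∀ x ∈ Set.uIoc b T, x ≠ b → (0:ℝ) = f x := by
      intro x hx _
      rw [Set.uIoc_of_le hbT] at hx
      simp only [hfdef, shf, hbdef] at hx ⊢
      rw [if_neg (by intro hc; exact absurd hc.2 (not_lt.mpr (le_of_lt hx.1))), mul_zero]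
    have hf0a : IntervalIntegrable f volume 0 a :=
      (intervalIntegrable_const (c := (0:ℝ))).congr_ae (ae_restrict_of_eq_off_pt hz0a)
    have hfab : IntervalIntegrable f volume a b :=
      (hg a b).congr_ae (ae_restrict_of_eq_off_pt hzab)
    have hfbT : IntervalIntegrable f volume b T :=
      (intervalIntegrable_const (c := (0:ℝ))).congr_ae (ae_restrict_of_eq_off_pt hzbT)
    have hsplit : (∫ τ in (0:ℝ)..T, f τ) =
        (∫ τ in (0:ℝ)..a, f τ) + (∫ τ in a..b, f τ) + (∫ τ in b..T, f τ) := by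
      rw [intervalIntegral.integral_add_adjacent_intervals hf0a hfab,
        intervalIntegral.integral_add_adjacent_intervals (hf0a.trans hfab) hfbT]
    have hI1 : (∫ τ in (0:ℝ)..a, f τ) = 0 := by
      rw [intervalIntegral.integral_congr_ae
        (ae_imp_of_eq_off_pt (fun x hx hxc => (hz0a x hx hxc).symm))]
      simp
    have hI3 : (∫ τ in b..T, f τ) = 0 := by
      rw [intervalIntegral.integral_congr_ae
        (ae_imp_of_eq_off_pt (fun x hx hxc => (hzbT x hx hxc).symm))]
      simp
    have hI2 : (∫ τ in a..b, f τ) = ((T - a) ^ α - (T - b) ^ α) / α := by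
      rw [intervalIntegral.integral_congr_ae
        (ae_imp_of_eq_off_pt (fun x hx hxc => (hzab x hx hxc).symm))]
      have := intervalIntegral.integral_comp_sub_left (a := a) (b := b)
        (fun u : ℝ => u ^ (α - 1)) T
      rw [hgdef]
      rw [this, integral_rpow (Or.inl (by linarith : (-1:ℝ) < α - 1))]
      norm_num
    have hTa : T - a = ((j:ℝ) - i) * h := by rw [hTdef, hadef]; ring
    have hTb : T - b = ((j:ℝ) - i - 1) * h := by rw [hTdef, hbdef]; ring
    have hji : (0:ℝ) ≤ (j:ℝ) - i := by linarith
    have hji1 : (0:ℝ) ≤ (j:ℝ) - i - 1 := by linarith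
    rw [rlInt, hsplit, hI1, hI2, hI3, hTa, hTb,
      Real.mul_rpow hji hh.le, Real.mul_rpow hji1 hh.le,
      Real.Gamma_add_one hα.ne']
    field_simp
    ring
  · intro hji
    have hji' : (j : ℝ) ≤ (i : ℝ) := by exact_mod_cast hji
    have hT0 : (0:ℝ) ≤ T := by positivity
    have hTi : T ≤ (i:ℝ) * h := by rw [hTdef]; nlinarith
    have hz : ∀ x ∈ Set.uIoc (0:ℝ) T, x ≠ (i:ℝ) * h →
        (T - x) ^ (α - 1) * shf h i x = 0 := by
      intro x hx hxc
      rw [Set.uIoc_of_le hT0] at hx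
      have hxlt : x < (i:ℝ) * h := lt_of_le_of_ne (hx.2.trans hTi) hxc
      simp only [shf]
      rw [if_neg (by intro hc; exact absurd hc.1 (not_le.mpr hxlt)), mul_zero]
    rw [rlInt, intervalIntegral.integral_congr_ae (ae_imp_of_eq_off_pt hz)]
    simp
end

section
/- Let α > 0, h > 0, and let i, j be natural numbers with j ≥ i+1, and set k = j − i. Let S_i be the i-th sample-and-hold function of step h. Then the increment of the Riemann–Liouville fractional integral of order α of S_i between consecutive grid nodes satisfies J^α S_i((j+1)·h) − J^α S_i(j·h) = (h^α / Γ(α+1)) · ((k+1)^α − 2·k^α + (k−1)^α), while J^α S_i((i+1)·h) − J^α S_i(i·h) = h^α / Γ(α+1). (These are the entries ξ_k of the operational matrix P_{αst} of Theorem 3.1.) -/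
open MeasureTheory Real

section AuxSHF

open intervalIntegral in
lemma aux_integral_rpow {r a b : ℝ} (hr : -1 < r) :
    ∫ x in a..b, x ^ r = (b ^ (r + 1) - a ^ (r + 1)) / (r + 1) :=
  integral_rpow (Or.inl hr)

lemma kern_intable {α : ℝ} (hα : 0 < α) (t a b : ℝ) :
    IntervalIntegrable (fun τ => (t - τ) ^ (α - 1)) volume a b := by
  have := ((intervalIntegral.intervalIntegrable_rpow' (a := t - a) (b := t - b)
    (show (-1:ℝ) < α - 1 by linarith)).comp_sub_left t)
  simpa using this

lemma shf_intable {α h : ℝ} (hα : 0 < α) (i : ℕ) (t a b : ℝ) :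
    IntervalIntegrable (fun τ => (t - τ) ^ (α - 1) * shf h i τ) volume a b := by
  have hfun : (fun τ => (t - τ) ^ (α - 1) * shf h i τ)
      = Set.indicator (Set.Ico ((i:ℝ)*h) (((i:ℝ)+1)*h)) (fun τ => (t - τ) ^ (α - 1)) := by
    funext τ
    by_cases hc : (i : ℝ) * h ≤ τ ∧ τ < ((i : ℝ) + 1) * h <;>
      simp [shf, hc, Set.indicator, Set.mem_Ico]
  rw [intervalIntegrable_iff, hfun]
  exact ((kern_intable hα t a b).def').indicator measurableSet_Ico

lemma ae_ne (a : ℝ) : ∀ᵐ τ : ℝ, τ ≠ a := by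
  rw [ae_iff]
  simpa using Real.volume_singleton (x := a)

lemma rlInt_shf_zero {α h : ℝ} (hh : 0 < h) (i : ℕ) {t : ℝ} (ht : t ≤ (i:ℝ)*h)
    (ht0 : 0 ≤ t) :
    rlInt α (shf h i) t = 0 := by
  unfold rlInt
  rw [intervalIntegral.integral_congr_ae (g := fun _ => (0:ℝ)) ?_, intervalIntegral.integral_zero,
    mul_zero]
  filter_upwards [ae_ne ((i:ℝ)*h)] with τ hτ hmem
  rw [Set.uIoc_of_le ht0] at hmem
  have h1 : τ < (i:ℝ)*h := lt_of_le_of_ne (hmem.2.trans ht) hτ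
  simp [shf, not_le.mpr h1]

lemma rlInt_shf_eval {α h : ℝ} (hα : 0 < α) (hh : 0 < h) (i : ℕ) {t : ℝ}
    (ht : ((i:ℝ)+1)*h ≤ t) :
    rlInt α (shf h i) t
      = (1 / Real.Gamma (α+1)) * ((t - (i:ℝ)*h)^α - (t - ((i:ℝ)+1)*h)^α) := by
  set a : ℝ := (i:ℝ)*h with ha
  set b : ℝ := ((i:ℝ)+1)*h with hb
  have h0a : (0:ℝ) ≤ a := by positivity
  have hab : a ≤ b := by nlinarith
  have hbt : b ≤ t := ht
  unfold rlInt
  have split1 : (∫ τ in (0:ℝ)..b, (t - τ) ^ (α - 1) * shf h i τ)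
        + (∫ τ in b..t, (t - τ) ^ (α - 1) * shf h i τ)
      = ∫ τ in (0:ℝ)..t, (t - τ) ^ (α - 1) * shf h i τ :=
    intervalIntegral.integral_add_adjacent_intervals (shf_intable hα i t 0 b) (shf_intable hα i t b t)
  have split2 : (∫ τ in (0:ℝ)..a, (t - τ) ^ (α - 1) * shf h i τ)
        + (∫ τ in a..b, (t - τ) ^ (α - 1) * shf h i τ)
      = ∫ τ in (0:ℝ)..b, (t - τ) ^ (α - 1) * shf h i τ :=
    intervalIntegral.integral_add_adjacent_intervals (shf_intable hα i t 0 a) (shf_intable hα i t a b)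
  have I1 : (∫ τ in (0:ℝ)..a, (t - τ) ^ (α - 1) * shf h i τ) = 0 := by
    rw [intervalIntegral.integral_congr_ae (g := fun _ => (0:ℝ)), intervalIntegral.integral_zero]
    filter_upwards [ae_ne a] with τ hτ hmem
    rw [Set.uIoc_of_le h0a] at hmem
    have h1 : τ < a := lt_of_le_of_ne hmem.2 hτ
    simp [shf, not_le.mpr h1, ha]
    intro h2 _
    exfalso
    linarith
  have I3 : (∫ τ in b..t, (t - τ) ^ (α - 1) * shf h i τ) = 0 := by
    rw [intervalIntegral.integral_congr (g := fun _ => (0:ℝ)), intervalIntegral.integral_zero]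
    intro τ hmem
    rw [Set.uIcc_of_le hbt] at hmem
    have h1 : ¬ τ < ((i:ℝ)+1)*h := not_lt.mpr hmem.1
    simp [shf, h1]
  have I2 : (∫ τ in a..b, (t - τ) ^ (α - 1) * shf h i τ)
      = ((t - a)^α - (t - b)^α) / α := by
    rw [intervalIntegral.integral_congr_ae (g := fun τ => (t - τ) ^ (α - 1)) ?_]
    · have hcomp : (∫ τ in a..b, (t - τ) ^ (α - 1))
          = ∫ x in (t-b)..(t-a), x ^ (α - 1) :=
        intervalIntegral.integral_comp_sub_left (fun x => x ^ (α - 1)) t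
      rw [hcomp, aux_integral_rpow (by linarith : (-1:ℝ) < α - 1)]
      rw [sub_add_cancel]
    · filter_upwards [ae_ne b] with τ hτ hmem
      rw [Set.uIoc_of_le hab] at hmem
      have h1 : a ≤ τ := le_of_lt hmem.1
      have h2 : τ < b := lt_of_le_of_ne hmem.2 hτ
      simp [shf, ← ha, ← hb, h1, h2]
  rw [← split1, ← split2, I1, I2, I3]
  have hΓ : Real.Gamma (α + 1) = α * Real.Gamma α := Real.Gamma_add_one (ne_of_gt hα)
  have hΓ0 : Real.Gamma α ≠ 0 := ne_of_gt (Real.Gamma_pos_of_pos hα)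
  rw [hΓ]
  field_simp
  first | ring | trivial

end AuxSHF

/-- Increments of nodal values of `J^α S_i`: the entries `ξ_k` of `P_{αst}`. -/
theorem rlInt_shf_node_increment (α h : ℝ) (hα : 0 < α) (hh : 0 < h) (i j k : ℕ)
    (hij : i + 1 ≤ j) (hk : k = j - i) :
    rlInt α (shf h i) (((j : ℝ) + 1) * h) - rlInt α (shf h i) ((j : ℝ) * h) =
      h ^ α / Real.Gamma (α + 1) *
        (((k : ℝ) + 1) ^ α - 2 * (k : ℝ) ^ α + ((k : ℝ) - 1) ^ α) ∧
    rlInt α (shf h i) (((i : ℝ) + 1) * h) - rlInt α (shf h i) ((i : ℝ) * h) =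
      h ^ α / Real.Gamma (α + 1) := by
  have hjk : j = i + k := by omega
  have hk1 : 1 ≤ k := by omega
  have hjr : (j : ℝ) = (i : ℝ) + (k : ℝ) := by rw [hjk]; push_cast; ring
  have hkr1 : (1:ℝ) ≤ (k:ℝ) := by exact_mod_cast hk1
  constructor
  · have e1 : ((i:ℝ)+1)*h ≤ ((j:ℝ)+1)*h := by nlinarith
    have e2 : ((i:ℝ)+1)*h ≤ (j:ℝ)*h := by nlinarith
    rw [rlInt_shf_eval hα hh i e1, rlInt_shf_eval hα hh i e2]
    have r1 : ((j:ℝ)+1)*h - (i:ℝ)*h = ((k:ℝ)+1)*h := by rw [hjr]; ring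
    have r2 : ((j:ℝ)+1)*h - ((i:ℝ)+1)*h = (k:ℝ)*h := by rw [hjr]; ring
    have r3 : (j:ℝ)*h - (i:ℝ)*h = (k:ℝ)*h := by rw [hjr]; ring
    have r4 : (j:ℝ)*h - ((i:ℝ)+1)*h = ((k:ℝ)-1)*h := by rw [hjr]; ring
    rw [r1, r2, r3, r4,
      Real.mul_rpow (by linarith) hh.le,
      Real.mul_rpow (by linarith) hh.le,
      Real.mul_rpow (by linarith) hh.le]
    field_simp
    ring
  · rw [rlInt_shf_eval hα hh i le_rfl, rlInt_shf_zero hh i le_rfl (by positivity)]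
    have r1 : ((i:ℝ)+1)*h - (i:ℝ)*h = h := by ring
    rw [r1, sub_self, Real.zero_rpow (ne_of_gt hα)]
    field_simp
    ring
end

section
/- Let α > 0, h > 0, and let i be a natural number. Let T_i be the i-th right-handed triangular function of step h, and let J^α denote the Riemann–Liouville fractional integral of order α. Then for every t ≥ 0: (i) if 0 ≤ t ≤ i·h then J^α T_i(t) = 0; (ii) if i·h ≤ t ≤ (i+1)·h then J^α T_i(t) = (t − i·h)^{α+1} / (h·Γ(α+2)); (iii) if t ≥ (i+1)·h then J^α T_i(t) = ((t − i·h)^{α+1} − (t − (i+1)·h)^{α+1} − (α+1)·h·(t − (i+1)·h)^α) / (h·Γ(α+2)). -/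
open MeasureTheory Real

private lemma rpow_succ' {x : ℝ} (hx : 0 ≤ x) {β : ℝ} (hβ : 0 < β) :
    x ^ (β + 1) = x * x ^ β := by
  rcases eq_or_lt_of_le hx with h | h
  · rw [← h, Real.zero_rpow (by positivity), Real.zero_rpow hβ.ne']; ring
  · rw [Real.rpow_add_one h.ne', mul_comm]

private lemma intint (α t : ℝ) (hα : 0 < α) (g : ℝ → ℝ) (hg : Continuous g) (p q : ℝ) :
    IntervalIntegrable (fun τ => (t - τ) ^ (α - 1) * g τ) volume p q := by
  have h0 : IntervalIntegrable (fun s : ℝ => s ^ (α - 1)) volume (t - p) (t - q) :=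
    intervalIntegral.intervalIntegrable_rpow' (by linarith)
  have h1 := h0.comp_sub_left t
  simp only [sub_sub_cancel] at h1
  exact h1.mul_continuousOn hg.continuousOn

private lemma key (α t a c : ℝ) (hα : 0 < α) (hac : a ≤ c) (hct : c ≤ t) :
    (∫ τ in a..c, (t - τ) ^ (α - 1) * (τ - a))
      = (t - a) * ((t - a) ^ α - (t - c) ^ α) / α
        - ((t - a) ^ (α + 1) - (t - c) ^ (α + 1)) / (α + 1) := by
  have h1 : (∫ τ in a..c, (t - τ) ^ (α - 1) * (τ - a))
      = ∫ τ in a..c, (fun s => s ^ (α - 1) * (t - s - a)) (t - τ) := by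
    apply intervalIntegral.integral_congr
    intro τ _
    simp only []
    ring_nf
  rw [h1, intervalIntegral.integral_comp_sub_left (fun s => s ^ (α - 1) * (t - s - a)) t]
  have h2 : Set.EqOn (fun s : ℝ => s ^ (α - 1) * (t - s - a))
      (fun s : ℝ => (t - a) * s ^ (α - 1) - s ^ α) (Set.uIcc (t - c) (t - a)) := by
    intro s hs
    have hs0 : 0 ≤ s := by
      rcases Set.mem_uIcc.mp hs with ⟨h', _⟩ | ⟨h', _⟩ <;> linarith
    simp only []
    rcases eq_or_lt_of_le hs0 with h | h
    · rw [← h]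
      rcases lt_trichotomy α 1 with h' | h' | h'
      · rw [Real.zero_rpow (by linarith), Real.zero_rpow hα.ne']; ring
      · subst h'; norm_num
      · rw [Real.zero_rpow (by linarith), Real.zero_rpow hα.ne']; ring
    · have : s ^ α = s ^ (α - 1) * s := by
        rw [← Real.rpow_add_one h.ne']; ring_nf
      rw [this]; ring
  rw [intervalIntegral.integral_congr h2]
  have i1 : IntervalIntegrable (fun s : ℝ => (t - a) * s ^ (α - 1)) volume (t - c) (t - a) :=
    (intervalIntegral.intervalIntegrable_rpow' (by linarith)).const_mul _
  have i2 : IntervalIntegrable (fun s : ℝ => s ^ α) volume (t - c) (t - a) :=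
    intervalIntegral.intervalIntegrable_rpow' (by linarith)
  rw [intervalIntegral.integral_sub i1 i2, intervalIntegral.integral_const_mul,
    integral_rpow (Or.inl (by linarith)), integral_rpow (Or.inl (by linarith))]
  have e1 : α - 1 + 1 = α := by ring
  rw [e1]
  ring

/-- Explicit piecewise formula for `J^α T_i`. -/
theorem rlInt_tf_piecewise (α h : ℝ) (hα : 0 < α) (hh : 0 < h) (i : ℕ) (t : ℝ)
    (ht : 0 ≤ t) :
    (t ≤ (i : ℝ) * h → rlInt α (tf h i) t = 0) ∧
    ((i : ℝ) * h ≤ t → t ≤ ((i : ℝ) + 1) * h →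
      rlInt α (tf h i) t = (t - (i : ℝ) * h) ^ (α + 1) / (h * Real.Gamma (α + 2))) ∧
    (((i : ℝ) + 1) * h ≤ t →
      rlInt α (tf h i) t =
        ((t - (i : ℝ) * h) ^ (α + 1) - (t - ((i : ℝ) + 1) * h) ^ (α + 1) -
            (α + 1) * h * (t - ((i : ℝ) + 1) * h) ^ α) / (h * Real.Gamma (α + 2))) := by
  have hΓpos : 0 < Real.Gamma α := Real.Gamma_pos_of_pos hα
  have hΓ : Real.Gamma (α + 2) = (α + 1) * α * Real.Gamma α := by
    have h1 : α + 2 = (α + 1) + 1 := by ring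
    rw [h1, Real.Gamma_add_one (by linarith), Real.Gamma_add_one hα.ne']
    ring
  set a : ℝ := (i : ℝ) * h with ha
  have hb : ((i : ℝ) + 1) * h = a + h := by rw [ha]; ring
  have ha0 : 0 ≤ a := by positivity
  set F : ℝ → ℝ := fun τ => (t - τ) ^ (α - 1) * tf h i τ with hF
  have hrl : rlInt α (tf h i) t = (1 / Real.Gamma α) * ∫ τ in (0:ℝ)..t, F τ := rfl
  -- F vanishes below a and above a + h
  have hF0 : ∀ τ : ℝ, τ ≤ a → F τ = 0 := by
    intro τ hτ
    simp only [hF, tf, ← ha, ← hb]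
    split_ifs with hc
    · have : τ = a := le_antisymm hτ hc.1
      rw [this]; simp
    · simp
  have hF1 : ∀ τ : ℝ, a + h ≤ τ → F τ = 0 := by
    intro τ hτ
    simp only [hF, tf, ← ha]
    rw [if_neg, mul_zero]
    rintro ⟨-, h2⟩
    rw [hb] at h2
    linarith
  -- interval integrability / vanishing on [p, q] below a or above a+h
  have hzero_int : ∀ p q : ℝ, (∀ τ ∈ Set.uIcc p q, F τ = 0) →
      IntervalIntegrable F volume p q ∧ (∫ τ in p..q, F τ) = 0 := by
    intro p q hpq
    constructor
    · exact (intervalIntegrable_const (c := (0:ℝ))).congr_ae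
        (Filter.EventuallyEq.symm <| (ae_restrict_iff' measurableSet_uIoc).mpr
          (Filter.Eventually.of_forall fun τ hτ =>
            hpq τ (Set.uIoc_subset_uIcc hτ)))
    · rw [intervalIntegral.integral_congr (g := fun _ => 0) hpq]
      simp
  -- F agrees a.e. with the smooth integrand on [a, c] for c ≤ a + h
  have hcong : ∀ c : ℝ, a ≤ c → c ≤ a + h →
      (∀ᵐ τ ∂volume, τ ∈ Set.uIoc a c → F τ = (t - τ) ^ (α - 1) * ((τ - a) / h)) := by
    intro c hac hc
    have hne : ∀ᵐ τ : ℝ ∂(volume : Measure ℝ), τ ≠ a + h := by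
      rw [MeasureTheory.ae_iff]
      simp only [not_not, Set.setOf_eq_eq_singleton]
      exact measure_singleton _
    filter_upwards [hne] with τ hτ hmem
    rw [Set.uIoc_of_le hac] at hmem
    have h1 : a ≤ τ := le_of_lt hmem.1
    have h2 : τ < a + h := lt_of_le_of_ne (le_trans hmem.2 hc) hτ
    simp only [hF, tf, ← ha]
    rw [if_pos ⟨h1, by rw [hb]; exact h2⟩]
  have hGint : ∀ p q : ℝ, IntervalIntegrable
      (fun τ => (t - τ) ^ (α - 1) * ((τ - a) / h)) volume p q := by
    intro p q
    exact intint α t hα _ (by continuity) p q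
  have hFint : ∀ c : ℝ, a ≤ c → c ≤ a + h → IntervalIntegrable F volume a c := by
    intro c hac hc
    exact (hGint a c).congr_ae (Filter.EventuallyEq.symm <|
      (ae_restrict_iff' measurableSet_uIoc).mpr ((hcong c hac hc).mono fun τ h hm => h hm))
  have hFeq : ∀ c : ℝ, a ≤ c → c ≤ a + h → c ≤ t →
      (∫ τ in a..c, F τ)
        = ((t - a) * ((t - a) ^ α - (t - c) ^ α) / α
            - ((t - a) ^ (α + 1) - (t - c) ^ (α + 1)) / (α + 1)) / h := by
    intro c hac hc hct
    rw [intervalIntegral.integral_congr_ae (hcong c hac hc)]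
    have : (fun τ => (t - τ) ^ (α - 1) * ((τ - a) / h))
        = fun τ => ((t - τ) ^ (α - 1) * (τ - a)) / h := by
      funext τ; ring
    rw [this, intervalIntegral.integral_div, key α t a c hα hac hct]
  refine ⟨?_, ?_, ?_⟩
  · -- case t ≤ a
    intro hta
    have := hzero_int 0 t (fun τ hτ => hF0 τ (by
      rcases Set.mem_uIcc.mp hτ with ⟨h1, h2⟩ | ⟨h1, h2⟩ <;> linarith))
    rw [hrl, this.2, mul_zero]
  · -- case a ≤ t ≤ a + h
    intro hat hta
    rw [hb] at hta
    have hz := hzero_int 0 a (fun τ hτ => hF0 τ (by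
      rcases Set.mem_uIcc.mp hτ with ⟨h1, h2⟩ | ⟨h1, h2⟩ <;> linarith))
    have hsplit : (∫ τ in (0:ℝ)..t, F τ) = (∫ τ in (0:ℝ)..a, F τ) + ∫ τ in a..t, F τ :=
      (intervalIntegral.integral_add_adjacent_intervals hz.1 (hFint t hat hta)).symm
    rw [hrl, hsplit, hz.2, zero_add, hFeq t hat hta le_rfl, sub_self,
      Real.zero_rpow hα.ne', Real.zero_rpow (by positivity : α + 1 ≠ 0)]
    have hX : (t - a) ^ (α + 1) = (t - a) * (t - a) ^ α :=
      rpow_succ' (by linarith) hα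
    rw [hX, hΓ]
    field_simp
    ring
  · -- case t ≥ a + h
    intro hbt
    rw [hb] at hbt
    have hz := hzero_int 0 a (fun τ hτ => hF0 τ (by
      rcases Set.mem_uIcc.mp hτ with ⟨h1, h2⟩ | ⟨h1, h2⟩ <;> linarith))
    have hz3 := hzero_int (a + h) t (fun τ hτ => hF1 τ (by
      rcases Set.mem_uIcc.mp hτ with ⟨h1, h2⟩ | ⟨h1, h2⟩ <;> linarith))
    have hmid := hFint (a + h) (by linarith) le_rfl
    have hsplit2 : (∫ τ in a..t, F τ)
        = (∫ τ in a..(a+h), F τ) + ∫ τ in (a+h)..t, F τ :=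
      (intervalIntegral.integral_add_adjacent_intervals hmid hz3.1).symm
    have hsplit : (∫ τ in (0:ℝ)..t, F τ) = (∫ τ in (0:ℝ)..a, F τ) + ∫ τ in a..t, F τ :=
      (intervalIntegral.integral_add_adjacent_intervals hz.1
        (hmid.trans hz3.1)).symm
    rw [hrl, hsplit, hsplit2, hz.2, hz3.2, zero_add, add_zero,
      hFeq (a + h) (by linarith) le_rfl hbt, hb]
    have hX : (t - a) ^ (α + 1) = (t - a) * (t - a) ^ α :=
      rpow_succ' (by linarith) hα
    have hY : (t - (a + h)) ^ (α + 1) = (t - (a + h)) * (t - (a + h)) ^ α :=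
      rpow_succ' (by linarith) hα
    rw [hX, hY, hΓ]
    field_simp
    ring
end

section
/- Let α > 0, h > 0, and let i, j be natural numbers. Let T_i be the i-th right-handed triangular function of step h. Then the Riemann–Liouville fractional integral of order α of T_i evaluated at the grid node t = j·h satisfies: J^α T_i(j·h) = (h^α / Γ(α+2)) · (k^{α+1} − (k−1)^α · (k+α)) with k = j − i, whenever j ≥ i+1; and J^α T_i(j·h) = 0 whenever j ≤ i. (These are exactly the entries φ_k of the generalized one-shot operational matrix P_{αts} of Theorem 3.2.) -/
open MeasureTheory Real

lemma tf_eq_zero_left (h : ℝ) (i : ℕ) {t : ℝ} (ht : t ≤ (i:ℝ) * h) : tf h i t = 0 := by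
  unfold tf; split_ifs with hc
  · have : t = (i:ℝ)*h := le_antisymm ht hc.1
    simp [this]
  · rfl

lemma tf_eq_zero_right (h : ℝ) (i : ℕ) {t : ℝ} (ht : ((i:ℝ)+1)*h ≤ t) : tf h i t = 0 := by
  unfold tf; split_ifs with hc
  · exact absurd hc.2 (not_lt.2 ht)
  · rfl

lemma tf_eq_mid (h : ℝ) (i : ℕ) {t : ℝ} (h1 : (i:ℝ)*h ≤ t) (h2 : t < ((i:ℝ)+1)*h) :
    tf h i t = (t - (i:ℝ)*h)/h := by
  unfold tf; rw [if_pos ⟨h1, h2⟩]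

lemma rpow_add_one' {x : ℝ} (hx : 0 ≤ x) {α : ℝ} (hα : 0 < α) : x ^ (α+1) = x ^ α * x := by
  rcases hx.eq_or_lt with h0 | h0
  · rw [← h0, Real.zero_rpow (by positivity), Real.zero_rpow hα.ne', zero_mul]
  · rw [Real.rpow_add h0, Real.rpow_one]

open intervalIntegral in
lemma integral_rpow_sub (T p : ℝ) (hp : -1 < p) (a b : ℝ) :
    ∫ τ in a..b, (T - τ) ^ p = ((T-a)^(p+1) - (T-b)^(p+1))/(p+1) := by
  rw [intervalIntegral.integral_comp_sub_left (fun u => u ^ p) T]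
  exact integral_rpow (Or.inl hp)

lemma intint_rpow_sub (T p : ℝ) (hp : -1 < p) (a b : ℝ) :
    IntervalIntegrable (fun τ => (T - τ) ^ p) volume a b := by
  have := (intervalIntegral.intervalIntegrable_rpow' (a := T - a) (b := T - b) hp).comp_sub_left T
  simpa using this

/-- Nodal values of `J^α T_i`: the entries `φ_k` of the operational matrix `P_{αts}`. -/
theorem rlInt_tf_node (α h : ℝ) (hα : 0 < α) (hh : 0 < h) (i j : ℕ) :
    (∀ k : ℕ, k = j - i → i + 1 ≤ j →
      rlInt α (tf h i) ((j : ℝ) * h) =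
        h ^ α / Real.Gamma (α + 2) *
          ((k : ℝ) ^ (α + 1) - ((k : ℝ) - 1) ^ α * ((k : ℝ) + α))) ∧
    (j ≤ i → rlInt α (tf h i) ((j : ℝ) * h) = 0) := by
  constructor
  · intro k hk hij
    have hij' : i ≤ j := le_trans (Nat.le_succ i) hij
    have hk1 : 1 ≤ (k:ℝ) := by exact_mod_cast (by omega : 1 ≤ k)
    have hkr : (k:ℝ) = (j:ℝ) - (i:ℝ) := by
      subst hk; push_cast [Nat.cast_sub hij']; ring
    set T := (j:ℝ)*h with hT
    set a := (i:ℝ)*h with ha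
    set b := ((i:ℝ)+1)*h with hb
    have hi1j : ((i:ℝ)+1) ≤ (j:ℝ) := by exact_mod_cast hij
    have hab : a < b := by
      simp only [ha, hb]; nlinarith
    have hbT : b ≤ T := by
      simp only [hb, hT]; nlinarith
    have haT : 0 ≤ a := by positivity
    set g : ℝ → ℝ := fun τ => (T - τ) ^ (α - 1) * tf h i τ with hg
    set n : ℝ → ℝ := fun τ => ((T - a) * (T - τ) ^ (α - 1) - (T - τ) ^ α) / h with hn
    -- the integrand vanishes on [0,a] and on [b,T]
    have e1 : Set.EqOn g (fun _ => 0) (Set.uIcc 0 a) := by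
      intro τ hτ
      rw [Set.uIcc_of_le haT] at hτ
      simp [hg, tf_eq_zero_left h i hτ.2]
    have e2 : Set.EqOn g (fun _ => 0) (Set.uIcc b T) := by
      intro τ hτ
      rw [Set.uIcc_of_le hbT] at hτ
      simp [hg, tf_eq_zero_right h i hτ.1]
    -- a.e. equality with the nice function on the middle interval
    have hbnull : ∀ᵐ (τ : ℝ), τ ≠ b := by
      have : ({b} : Set ℝ) =ᵐ[volume] (∅ : Set ℝ) := by
        simp [ae_eq_empty]
      rw [ae_iff]
      simpa using measure_mono_null (by intro x hx; simpa using hx) (measure_singleton b)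
    have hae : ∀ᵐ τ : ℝ, τ ∈ Set.uIoc a b → g τ = n τ := by
      filter_upwards [hbnull] with τ hτb hmem
      rw [Set.uIoc_of_le hab.le] at hmem
      have hτb' : τ < b := lt_of_le_of_ne hmem.2 hτb
      have hpos : 0 < T - τ := by linarith
      have h1 : tf h i τ = (τ - a)/h := tf_eq_mid h i (le_of_lt hmem.1) hτb'
      have h2 : (T - τ) ^ α = (T - τ) ^ (α - 1) * (T - τ) := by
        rw [← Real.rpow_add_one (ne_of_gt hpos)]
        norm_num
      simp only [hg, hn, h1, h2]
      field_simp
      ring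
    -- integrability
    have In1 : IntervalIntegrable (fun τ => (T - τ) ^ (α - 1)) volume a b :=
      intint_rpow_sub T (α - 1) (by linarith) a b
    have In2 : IntervalIntegrable (fun τ => (T - τ) ^ α) volume a b :=
      intint_rpow_sub T α (by linarith) a b
    have In : IntervalIntegrable n volume a b := by
      simpa [hn, sub_div] using ((In1.const_mul (T - a)).sub In2).div_const h
    have hng : g =ᵐ[volume.restrict (Set.uIoc a b)] n :=
      (ae_restrict_iff' measurableSet_uIoc).mpr hae
    have Ig_ab : IntervalIntegrable g volume a b := by
      rw [intervalIntegrable_iff] at In ⊢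
      exact In.congr hng.symm
    have Ig_0a : IntervalIntegrable g volume 0 a := by
      rw [intervalIntegrable_iff]
      refine (integrableOn_congr_fun (fun τ hτ => e1 (Set.uIoc_subset_uIcc hτ))
        measurableSet_uIoc).mpr ?_
      simp [integrableOn_const]
    have Ig_bT : IntervalIntegrable g volume b T := by
      rw [intervalIntegrable_iff]
      refine (integrableOn_congr_fun (fun τ hτ => e2 (Set.uIoc_subset_uIcc hτ))
        measurableSet_uIoc).mpr ?_
      simp [integrableOn_const]
    -- split the integral
    have split1 : (∫ τ in (0:ℝ)..a, g τ) + ∫ τ in a..b, g τ = ∫ τ in (0:ℝ)..b, g τ :=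
      intervalIntegral.integral_add_adjacent_intervals Ig_0a Ig_ab
    have split2 : (∫ τ in (0:ℝ)..b, g τ) + ∫ τ in b..T, g τ = ∫ τ in (0:ℝ)..T, g τ :=
      intervalIntegral.integral_add_adjacent_intervals (Ig_0a.trans Ig_ab) Ig_bT
    have z1 : (∫ τ in (0:ℝ)..a, g τ) = 0 := by
      rw [intervalIntegral.integral_congr e1]; simp
    have z2 : (∫ τ in b..T, g τ) = 0 := by
      rw [intervalIntegral.integral_congr e2]; simp
    have key : (∫ τ in (0:ℝ)..T, g τ) = ∫ τ in a..b, n τ := by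
      rw [← split2, ← split1, z1, z2, intervalIntegral.integral_congr_ae hae]
      ring
    -- compute the middle integral
    have comp : (∫ τ in a..b, n τ) =
        ((T - a) * (((T-a)^α - (T-b)^α)/α) - ((T-a)^(α+1) - (T-b)^(α+1))/(α+1)) / h := by
      have hmid : (∫ τ in a..b, n τ) =
          ((T - a) * (∫ τ in a..b, (T - τ) ^ (α-1)) - ∫ τ in a..b, (T - τ) ^ α) / h := by
        simp only [hn]
        rw [intervalIntegral.integral_div,
          intervalIntegral.integral_sub (In1.const_mul _) In2,
          intervalIntegral.integral_const_mul]
      have r1 := integral_rpow_sub T (α-1) (by linarith) a b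
      have r2 := integral_rpow_sub T α (by linarith) a b
      rw [hmid, r1, r2]
      norm_num
    -- final algebra
    have hTa : T - a = (k:ℝ) * h := by rw [hkr, hT, ha]; ring
    have hTb : T - b = ((k:ℝ) - 1) * h := by rw [hkr, hT, hb]; ring
    have hknn : (0:ℝ) ≤ (k:ℝ) := by linarith
    have hk1nn : (0:ℝ) ≤ (k:ℝ) - 1 := by linarith
    have mk1 : ((k:ℝ)*h)^α = (k:ℝ)^α * h^α := Real.mul_rpow hknn hh.le
    have mk2 : (((k:ℝ)-1)*h)^α = ((k:ℝ)-1)^α * h^α := Real.mul_rpow hk1nn hh.le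
    have mk3 : ((k:ℝ)*h)^(α+1) = (k:ℝ)^α * (k:ℝ) * (h^α * h) := by
      rw [Real.mul_rpow hknn hh.le, rpow_add_one' hknn hα, rpow_add_one' hh.le hα]
    have mk4 : (((k:ℝ)-1)*h)^(α+1) = ((k:ℝ)-1)^α * ((k:ℝ)-1) * (h^α * h) := by
      rw [Real.mul_rpow hk1nn hh.le, rpow_add_one' hk1nn hα, rpow_add_one' hh.le hα]
    have hΓ : Real.Gamma (α + 2) = (α + 1) * α * Real.Gamma α := by
      have h1 : α + 2 = (α + 1) + 1 := by ring
      rw [h1, Real.Gamma_add_one (by positivity), Real.Gamma_add_one hα.ne']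
      ring
    have hΓpos : 0 < Real.Gamma α := Real.Gamma_pos_of_pos hα
    rw [rlInt, key, comp, hTa, hTb, mk1, mk2, mk3, mk4, hΓ, rpow_add_one' hknn hα]
    have hα1 : α + 1 ≠ 0 := by positivity
    field_simp
    ring
  · intro hji
    have hji' : (j:ℝ)*h ≤ (i:ℝ)*h := by
      have : (j:ℝ) ≤ (i:ℝ) := by exact_mod_cast hji
      nlinarith
    have e : Set.EqOn (fun τ => ((j:ℝ)*h - τ) ^ (α - 1) * tf h i τ) (fun _ => 0)
        (Set.uIcc 0 ((j:ℝ)*h)) := by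
      intro τ hτ
      rw [Set.uIcc_of_le (by positivity)] at hτ
      simp [tf_eq_zero_left h i (le_trans hτ.2 hji')]
    rw [rlInt, intervalIntegral.integral_congr e]
    simp
end

section
/- Let α > 0, h > 0, and let i, j be natural numbers with j ≥ i+1, and set k = j − i. Let T_i be the i-th right-handed triangular function of step h. Then the increment of the Riemann–Liouville fractional integral of order α of T_i between consecutive grid nodes satisfies J^α T_i((j+1)·h) − J^α T_i(j·h) = (h^α / Γ(α+2)) · ((k+1)^{α+1} − (k+1+α)·k^α − k^{α+1} + (k+α)·(k−1)^α), while J^α T_i((i+1)·h) − J^α T_i(i·h) = h^α / Γ(α+2). (These are the entries ψ_k of the operational matrix P_{αtt} of Theorem 3.2.) -/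
open MeasureTheory Real

lemma my_rpow_sub_integrable (β t : ℝ) (hβ : -1 < β) (a b : ℝ) :
    IntervalIntegrable (fun τ => (t - τ) ^ β) volume a b := by
  have := (intervalIntegral.intervalIntegrable_rpow' (a := t - a) (b := t - b) hβ).comp_sub_left t
  simpa using this

lemma my_rpow_sub_integral (β t a b : ℝ) (hβ : -1 < β) :
    ∫ τ in a..b, (t - τ) ^ β = ((t - a) ^ (β + 1) - (t - b) ^ (β + 1)) / (β + 1) := by
  rw [intervalIntegral.integral_comp_sub_left (fun x => x ^ β) t,
    integral_rpow (Or.inl hβ)]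

lemma my_rpow_succ (x α : ℝ) (hx : 0 ≤ x) (hα : 0 < α) : x ^ (α + 1) = x ^ α * x := by
  rcases eq_or_lt_of_le hx with h | h
  · rw [← h, Real.zero_rpow (by positivity), Real.zero_rpow hα.ne', mul_zero]
  · rw [Real.rpow_add_one h.ne']

lemma rlInt_tf_eval (α h : ℝ) (hα : 0 < α) (hh : 0 < h) (i : ℕ) (c : ℝ) (hc : 1 ≤ c) :
    rlInt α (tf h i) ((i : ℝ) * h + c * h) =
      h ^ α / Real.Gamma α *
        (c * (c ^ α - (c - 1) ^ α) / α -
          (c ^ (α + 1) - (c - 1) ^ (α + 1)) / (α + 1)) := by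
  set a := (i : ℝ) * h with ha
  set t := a + c * h with ht
  have ha0 : 0 ≤ a := by positivity
  have hah : a + h ≤ t := by nlinarith
  have hβ : -1 < α - 1 := by linarith
  have hia : ((i : ℝ) + 1) * h = a + h := by rw [ha]; ring
  set F : ℝ → ℝ := fun τ => (t - τ) ^ (α - 1) * tf h i τ with hF
  -- F vanishes outside [a, a+h)
  have hF0 : ∀ τ, τ ≤ a ∨ a + h ≤ τ → F τ = 0 := by
    intro τ hτ
    have : tf h i τ = 0 := by
      rw [tf, hia]
      split_ifs with hcond
      · rcases hτ with hτ | hτ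
        · have : τ = a := le_antisymm hτ hcond.1
          rw [this]; simp [ha]
        · exact absurd hcond.2 (not_lt.2 hτ)
      · rfl
    simp [hF, this]
  have I1 : IntervalIntegrable F volume 0 a := by
    refine (intervalIntegrable_const (c := (0:ℝ))).congr ?_
    intro τ hτ
    rw [Set.uIoc_of_le ha0] at hτ
    exact (hF0 τ (Or.inl hτ.2)).symm
  have I3 : IntervalIntegrable F volume (a + h) t := by
    refine (intervalIntegrable_const (c := (0:ℝ))).congr ?_
    intro τ hτ
    rw [Set.uIoc_of_le hah] at hτ
    exact (hF0 τ (Or.inr hτ.1.le)).symm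
  -- the middle piece
  set G : ℝ → ℝ := fun τ => (t - a) / h * (t - τ) ^ (α - 1) - (1 / h) * (t - τ) ^ α with hG
  have hGint : IntervalIntegrable G volume a (a + h) :=
    ((my_rpow_sub_integrable (α - 1) t hβ a (a+h)).const_mul _).sub
      ((my_rpow_sub_integrable α t (by linarith) a (a+h)).const_mul _)
  have hae : ∀ᵐ τ : ℝ, τ ∈ Set.uIoc a (a + h) → F τ = G τ := by
    have hne : ∀ᵐ τ : ℝ, τ ≠ a + h := by
      refine ae_iff.2 ?_
      simpa using Real.volume_singleton (x := a + h)
    filter_upwards [hne] with τ hτne hτ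
    rw [Set.uIoc_of_le (by linarith)] at hτ
    have hτlt : τ < a + h := lt_of_le_of_ne hτ.2 hτne
    have htf : tf h i τ = (τ - a) / h := by
      rw [tf, hia, if_pos ⟨hτ.1.le, hτlt⟩]
    have htτ : 0 < t - τ := by linarith
    have hpow : (t - τ) ^ α = (t - τ) ^ (α - 1) * (t - τ) := by
      rw [← Real.rpow_add_one htτ.ne', sub_add_cancel]
    show (t - τ) ^ (α - 1) * tf h i τ = (t - a) / h * (t - τ) ^ (α - 1) - 1 / h * (t - τ) ^ α
    rw [htf, hpow]
    field_simp
    ring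
  have I2 : IntervalIntegrable F volume a (a + h) := by
    refine hGint.congr_ae ?_
    refine (ae_restrict_iff' measurableSet_uIoc).2 ?_
    filter_upwards [hae] with τ hτ hmem
    exact (hτ hmem).symm
  have hmid : ∫ τ in a..(a + h), F τ = ∫ τ in a..(a + h), G τ :=
    intervalIntegral.integral_congr_ae hae
  have hz1 : ∫ τ in (0:ℝ)..a, F τ = 0 := by
    rw [intervalIntegral.integral_congr (g := fun _ => 0) fun τ hτ => by
      rw [Set.uIcc_of_le ha0] at hτ; exact hF0 τ (Or.inl hτ.2)]
    simp
  have hz3 : ∫ τ in (a + h)..t, F τ = 0 := by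
    rw [intervalIntegral.integral_congr (g := fun _ => 0) fun τ hτ => by
      rw [Set.uIcc_of_le hah] at hτ; exact hF0 τ (Or.inr hτ.1)]
    simp
  have hsplit : ∫ τ in (0:ℝ)..t, F τ = ∫ τ in a..(a + h), F τ := by
    rw [← intervalIntegral.integral_add_adjacent_intervals (I1.trans I2) I3,
      ← intervalIntegral.integral_add_adjacent_intervals I1 I2, hz1, hz3]
    ring
  -- evaluate G's integral
  have hGval : ∫ τ in a..(a + h), G τ =
      (t - a) / h * (((t - a) ^ α - (t - (a + h)) ^ α) / α) -
        (1 / h) * (((t - a) ^ (α + 1) - (t - (a + h)) ^ (α + 1)) / (α + 1)) := by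
    rw [hG, intervalIntegral.integral_sub
        ((my_rpow_sub_integrable (α - 1) t hβ a (a+h)).const_mul _)
        ((my_rpow_sub_integrable α t (by linarith) a (a+h)).const_mul _),
      intervalIntegral.integral_const_mul, intervalIntegral.integral_const_mul,
      my_rpow_sub_integral (α - 1) t a (a + h) hβ,
      my_rpow_sub_integral α t a (a + h) (by linarith),
      sub_add_cancel]
  have hta : t - a = c * h := by rw [ht]; ring
  have htah : t - (a + h) = (c - 1) * h := by rw [ht]; ring
  have hc0 : 0 ≤ c := by linarith
  have hc1 : 0 ≤ c - 1 := by linarith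
  have e1 : (c * h) ^ α = c ^ α * h ^ α := Real.mul_rpow hc0 hh.le
  have e2 : ((c - 1) * h) ^ α = (c - 1) ^ α * h ^ α := Real.mul_rpow hc1 hh.le
  have e3 : (c * h) ^ (α + 1) = c ^ (α + 1) * (h ^ α * h) := by
    rw [Real.mul_rpow hc0 hh.le, my_rpow_succ h α hh.le hα]
  have e4 : ((c - 1) * h) ^ (α + 1) = (c - 1) ^ (α + 1) * (h ^ α * h) := by
    rw [Real.mul_rpow hc1 hh.le, my_rpow_succ h α hh.le hα]
  have hΓ : Real.Gamma α ≠ 0 := (Real.Gamma_pos_of_pos hα).ne'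
  rw [rlInt, hsplit, hmid, hGval, hta, htah, e1, e2, e3, e4]
  field_simp

lemma rlInt_tf_zero (α h : ℝ) (hα : 0 < α) (hh : 0 < h) (i : ℕ) :
    rlInt α (tf h i) ((i : ℝ) * h) = 0 := by
  have ha0 : (0:ℝ) ≤ (i : ℝ) * h := by positivity
  rw [rlInt, intervalIntegral.integral_congr (g := fun _ => 0) fun τ hτ => ?_]
  · simp
  · rw [Set.uIcc_of_le ha0] at hτ
    have : tf h i τ = 0 := by
      rw [tf]
      split_ifs with hcond
      · have : τ = (i : ℝ) * h := le_antisymm hτ.2 hcond.1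
        rw [this]; simp
      · rfl
    simp [this]

/-- Increments of nodal values of `J^α T_i`: the entries `ψ_k` of `P_{αtt}`. -/
theorem rlInt_tf_node_increment (α h : ℝ) (hα : 0 < α) (hh : 0 < h) (i j k : ℕ)
    (hij : i + 1 ≤ j) (hk : k = j - i) :
    rlInt α (tf h i) (((j : ℝ) + 1) * h) - rlInt α (tf h i) ((j : ℝ) * h) =
      h ^ α / Real.Gamma (α + 2) *
        (((k : ℝ) + 1) ^ (α + 1) - ((k : ℝ) + 1 + α) * (k : ℝ) ^ α - (k : ℝ) ^ (α + 1) +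
          ((k : ℝ) + α) * ((k : ℝ) - 1) ^ α) ∧
    rlInt α (tf h i) (((i : ℝ) + 1) * h) - rlInt α (tf h i) ((i : ℝ) * h) =
      h ^ α / Real.Gamma (α + 2) := by
  have hΓ : Real.Gamma α ≠ 0 := (Real.Gamma_pos_of_pos hα).ne'
  have hα1 : α + 1 ≠ 0 := by positivity
  have hΓ2 : Real.Gamma (α + 2) = (α + 1) * (α * Real.Gamma α) := by
    have h1 : α + 2 = (α + 1) + 1 := by ring
    rw [h1, Real.Gamma_add_one hα1, Real.Gamma_add_one hα.ne']
  have hkj : (k : ℝ) = (j : ℝ) - (i : ℝ) := by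
    rw [hk, Nat.cast_sub (by omega)]
  have hk1 : 1 ≤ (k : ℝ) := by
    have : 1 ≤ k := by omega
    exact_mod_cast this
  constructor
  · have e1 : ((j : ℝ) + 1) * h = (i : ℝ) * h + ((k : ℝ) + 1) * h := by
      rw [hkj]; ring
    have e2 : (j : ℝ) * h = (i : ℝ) * h + (k : ℝ) * h := by
      rw [hkj]; ring
    rw [e1, e2, rlInt_tf_eval α h hα hh i ((k:ℝ)+1) (by linarith),
      rlInt_tf_eval α h hα hh i (k:ℝ) hk1]
    have r1 : ((k : ℝ) + 1) ^ (α + 1) = ((k : ℝ) + 1) ^ α * ((k : ℝ) + 1) :=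
      my_rpow_succ _ _ (by linarith) hα
    have r2 : (k : ℝ) ^ (α + 1) = (k : ℝ) ^ α * (k : ℝ) :=
      my_rpow_succ _ _ (by linarith) hα
    have r3 : ((k : ℝ) - 1) ^ (α + 1) = ((k : ℝ) - 1) ^ α * ((k : ℝ) - 1) :=
      my_rpow_succ _ _ (by linarith) hα
    have r4 : ((k : ℝ) + 1 - 1) = (k : ℝ) := by ring
    rw [r4, hΓ2, r1, r2, r3]
    field_simp
    ring
  · have e1 : ((i : ℝ) + 1) * h = (i : ℝ) * h + 1 * h := by ring
    rw [e1, rlInt_tf_eval α h hα hh i 1 le_rfl, rlInt_tf_zero α h hα hh i, hΓ2]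
    simp only [Real.one_rpow, sub_self, Real.zero_rpow hα.ne',
      Real.zero_rpow (by positivity : α + 1 ≠ 0), sub_zero, one_mul]
    field_simp
    ring
end

section
/- Let α > 0, h > 0, m a positive integer, and let c_0, …, c_{m−1} and d_0, …, d_{m−1} be real numbers. Let f be the hybrid function on [0, m·h) defined by f(t) = c_i + d_i·(t − i·h)/h for t ∈ [i·h, (i+1)·h) (i = 0, …, m−1), and f(t) = 0 for t ≥ m·h. Then for every integer j with 1 ≤ j ≤ m, the Riemann–Liouville fractional integral of order α of f at the node t = j·h equals J^α f(j·h) = (h^α/Γ(α+1)) · Σ_{i=0}^{j−1} c_i · ((j−i)^α − (j−i−1)^α) + (h^α/Γ(α+2)) · Σ_{i=0}^{j−1} d_i · ((j−i)^{α+1} − (j−i−1)^α·(j−i+α)). (This is the exact nodal content of Theorem 3.3.) -/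
open MeasureTheory Real

private lemma rpow_sub_one_mul (α : ℝ) (hα : 0 < α) {x : ℝ} (hx : 0 ≤ x) :
    x ^ (α - 1) * x = x ^ α := by
  rcases hx.eq_or_lt with h0 | h0
  · rw [← h0, mul_zero, eq_comm, Real.zero_rpow hα.ne']
  · rw [← Real.rpow_add_one h0.ne' (α - 1)]
    norm_num

private lemma rpow_mul_self (α : ℝ) {x : ℝ} (hx : 0 ≤ x) (hα : 0 < α) :
    x ^ α * x = x ^ (α + 1) := by
  rcases hx.eq_or_lt with h0 | h0
  · rw [← h0, mul_zero, eq_comm, Real.zero_rpow (by positivity)]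
  · rw [← Real.rpow_add_one h0.ne' α]

private lemma integral_rpow_sub_s6 (α : ℝ) (hα : 0 < α) (p q : ℝ) :
    ∫ x in p..q, x ^ (α - 1) = (q ^ α - p ^ α) / α := by
  rw [integral_rpow (Or.inl (by linarith))]
  have h : α - 1 + 1 = α := by ring
  rw [h]

private lemma integrable_rpow_sub (α : ℝ) (hα : 0 < α) (t a b : ℝ) :
    IntervalIntegrable (fun τ => (t - τ) ^ (α - 1)) volume a b := by
  have h1 : (-1:ℝ) < α - 1 := by linarith
  have := (intervalIntegral.intervalIntegrable_rpow' (a := t - a) (b := t - b) h1).comp_sub_left t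
  simpa using this

private lemma integral_rpow_sub_mul (α : ℝ) (hα : 0 < α) (p q : ℝ) (hp : 0 ≤ p) (hpq : p ≤ q) :
    ∫ x in p..q, x ^ (α - 1) * (q - x)
      = q * ((q ^ α - p ^ α) / α) - (q ^ (α + 1) - p ^ (α + 1)) / (α + 1) := by
  have h1 : ∫ x in p..q, x ^ (α - 1) * (q - x) = ∫ x in p..q, (q * x ^ (α - 1) - x ^ α) := by
    apply intervalIntegral.integral_congr
    intro x hx
    rw [Set.uIcc_of_le hpq] at hx
    have hx0 : 0 ≤ x := hp.trans hx.1
    simp only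
    rw [mul_sub, ← rpow_sub_one_mul α hα hx0]
    ring
  rw [h1, intervalIntegral.integral_sub
      ((intervalIntegral.intervalIntegrable_rpow' (by linarith)).const_mul q)
      (intervalIntegral.intervalIntegrable_rpow' (by linarith)),
    intervalIntegral.integral_const_mul, integral_rpow_sub_s6 α hα p q,
    integral_rpow (Or.inl (by linarith : (-1:ℝ) < α))]

private lemma integral_piece (α h : ℝ) (hα : 0 < α) (hh : 0 < h)
    (t a b : ℝ) (hab : a ≤ b) (hbt : b ≤ t) (C D : ℝ) :
    ∫ τ in a..b, (t - τ) ^ (α - 1) * (C + D * ((τ - a) / h))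
      = C * (((t - a) ^ α - (t - b) ^ α) / α)
        + (D / h) * ((t - a) * (((t - a) ^ α - (t - b) ^ α) / α)
            - ((t - a) ^ (α + 1) - (t - b) ^ (α + 1)) / (α + 1)) := by
  have hsplit : ∀ τ : ℝ, (t - τ) ^ (α - 1) * (C + D * ((τ - a) / h))
      = C * (t - τ) ^ (α - 1) + (D / h) * ((t - τ) ^ (α - 1) * (τ - a)) := by
    intro τ; field_simp
  simp only [hsplit]
  rw [intervalIntegral.integral_add
      ((integrable_rpow_sub α hα t a b).const_mul C)
      (((integrable_rpow_sub α hα t a b).mul_continuousOn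
        (by fun_prop : Continuous fun τ : ℝ => τ - a).continuousOn).const_mul (D / h)),
    intervalIntegral.integral_const_mul, intervalIntegral.integral_const_mul]
  congr 1
  · rw [intervalIntegral.integral_comp_sub_left (fun x => x ^ (α - 1)) t,
      integral_rpow_sub_s6 α hα]
  · congr 1
    have hrw : ∀ τ : ℝ, (t - τ) ^ (α - 1) * (τ - a)
        = (fun x => x ^ (α - 1) * ((t - a) - x)) (t - τ) := by
      intro τ; simp only; ring_nf
    simp only [hrw]
    rw [intervalIntegral.integral_comp_sub_left (fun x => x ^ (α - 1) * ((t - a) - x)) t,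
      integral_rpow_sub_mul α hα (t - b) (t - a) (by linarith) (by linarith)]

/-- Nodal content of Theorem 3.3: the RL fractional integral of a hybrid function at
grid nodes is given by the one-shot operational matrices. -/
theorem rlInt_hybrid_node (α h : ℝ) (hα : 0 < α) (hh : 0 < h) (m : ℕ) (hm : 0 < m)
    (c d : ℕ → ℝ) (f : ℝ → ℝ)
    (hf : ∀ t : ℝ, f t = ∑ i ∈ Finset.range m, (c i * shf h i t + d i * tf h i t))
    (j : ℕ) (hj1 : 1 ≤ j) (hjm : j ≤ m) :
    rlInt α f ((j : ℝ) * h) =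
      h ^ α / Real.Gamma (α + 1) *
          ∑ i ∈ Finset.range j, c i * (((j : ℝ) - i) ^ α - ((j : ℝ) - i - 1) ^ α) +
        h ^ α / Real.Gamma (α + 2) *
          ∑ i ∈ Finset.range j,
            d i * (((j : ℝ) - i) ^ (α + 1) - ((j : ℝ) - i - 1) ^ α * ((j : ℝ) - i + α)) := by
  set t : ℝ := (j : ℝ) * h with ht
  -- value of f inside each open subinterval
  have fval : ∀ i : ℕ, i < m → ∀ τ : ℝ, (i : ℝ) * h < τ → τ < ((i : ℝ) + 1) * h →
      f τ = c i + d i * ((τ - (i : ℝ) * h) / h) := by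
    intro i him τ h1 h2
    rw [hf τ, Finset.sum_eq_single_of_mem i (Finset.mem_range.mpr him)]
    · simp only [shf, tf]
      rw [if_pos ⟨h1.le, h2⟩, if_pos ⟨h1.le, h2⟩, mul_one]
    · intro k _ hki
      have hcond : ¬ ((k : ℝ) * h ≤ τ ∧ τ < ((k : ℝ) + 1) * h) := by
        rcases lt_or_gt_of_ne hki with hlt | hgt
        · rintro ⟨-, hc2⟩
          have hk1 : ((k : ℝ) + 1) ≤ (i : ℝ) := by exact_mod_cast hlt
          nlinarith
        · rintro ⟨hc1, -⟩
          have hk1 : ((i : ℝ) + 1) ≤ (k : ℝ) := by exact_mod_cast hgt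
          nlinarith
      simp [shf, tf, hcond]
  -- a.e. equality of the integrand with the nice function on each piece
  have hae : ∀ i : ℕ, i < j →
      (fun τ => (t - τ) ^ (α - 1) * (c i + d i * ((τ - (i : ℝ) * h) / h)))
        =ᵐ[volume.restrict (Set.uIoc ((i : ℝ) * h) (((i : ℝ) + 1) * h))]
      (fun τ => (t - τ) ^ (α - 1) * f τ) := by
    intro i hij
    have hab : (i : ℝ) * h ≤ ((i : ℝ) + 1) * h := by nlinarith
    rw [Set.uIoc_of_le hab]
    have h0 : ∀ᵐ τ ∂(volume : Measure ℝ), τ ≠ ((i : ℝ) + 1) * h := by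
      refine ae_iff.mpr ?_
      simpa using measure_singleton (μ := (volume : Measure ℝ)) (((i : ℝ) + 1) * h)
    filter_upwards [ae_restrict_of_ae h0, ae_restrict_mem measurableSet_Ioc]
      with τ hτne hτmem
    have hτ2 : τ < ((i : ℝ) + 1) * h := lt_of_le_of_ne hτmem.2 hτne
    rw [fval i (lt_of_lt_of_le hij hjm) τ hτmem.1 hτ2]
  -- interval integrability of the integrand on each piece
  have hcont : ∀ i : ℕ, Continuous fun τ : ℝ => c i + d i * ((τ - (i : ℝ) * h) / h) := by
    intro i; fun_prop
  have hnice : ∀ i : ℕ, IntervalIntegrable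
      (fun τ => (t - τ) ^ (α - 1) * (c i + d i * ((τ - (i : ℝ) * h) / h)))
      volume ((i : ℝ) * h) (((i : ℝ) + 1) * h) :=
    fun i => (integrable_rpow_sub α hα t _ _).mul_continuousOn (hcont i).continuousOn
  have hint : ∀ i : ℕ, i < j → IntervalIntegrable (fun τ => (t - τ) ^ (α - 1) * f τ)
      volume ((i : ℝ) * h) (((i : ℝ) + 1) * h) :=
    fun i hij => (hnice i).congr_ae (hae i hij)
  -- split the integral at the grid points
  have key := intervalIntegral.sum_integral_adjacent_intervals (μ := volume)
      (a := fun k : ℕ => (k : ℝ) * h) (n := j)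
      (f := fun τ => (t - τ) ^ (α - 1) * f τ)
      (by intro k hk; simpa [Nat.cast_add, Nat.cast_one] using hint k hk)
  simp only [Nat.cast_zero, zero_mul, Nat.cast_add, Nat.cast_one] at key
  rw [← ht] at key
  rw [rlInt, ← key, Finset.mul_sum]
  -- evaluate each piece
  have hpiece : ∀ i ∈ Finset.range j,
      (1 / Real.Gamma α) * ∫ τ in ((i : ℝ) * h)..(((i : ℝ) + 1) * h),
          (t - τ) ^ (α - 1) * f τ
        = h ^ α / Real.Gamma (α + 1) * (c i * (((j : ℝ) - i) ^ α - ((j : ℝ) - i - 1) ^ α))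
          + h ^ α / Real.Gamma (α + 2) *
            (d i * (((j : ℝ) - i) ^ (α + 1) - ((j : ℝ) - i - 1) ^ α * ((j : ℝ) - i + α))) := by
    intro i hi
    have hij : i < j := Finset.mem_range.mp hi
    set N : ℝ := (j : ℝ) - i with hN
    have hN1 : 1 ≤ N := by
      have : (i : ℝ) + 1 ≤ (j : ℝ) := by exact_mod_cast hij
      simp only [hN]; linarith
    have hab : (i : ℝ) * h ≤ ((i : ℝ) + 1) * h := by nlinarith
    have hbt : ((i : ℝ) + 1) * h ≤ t := by
      have : (i : ℝ) + 1 ≤ (j : ℝ) := by exact_mod_cast hij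
      rw [ht]; nlinarith
    rw [intervalIntegral.integral_congr_ae
        ((ae_restrict_iff' measurableSet_uIoc).mp (hae i hij).symm),
      integral_piece α h hα hh t _ _ hab hbt (c i) (d i)]
    have e1 : t - (i : ℝ) * h = N * h := by rw [ht, hN]; ring
    have e2 : t - ((i : ℝ) + 1) * h = (N - 1) * h := by rw [ht, hN]; ring
    rw [e1, e2]
    have hN0 : (0:ℝ) ≤ N := by linarith
    have hN10 : (0:ℝ) ≤ N - 1 := by linarith
    rw [Real.mul_rpow hN0 hh.le, Real.mul_rpow hN10 hh.le,
      Real.mul_rpow hN0 hh.le, Real.mul_rpow hN10 hh.le,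
      ← rpow_mul_self α hN0 hα, ← rpow_mul_self α hN10 hα,
      ← rpow_mul_self α hh.le hα]
    have hG1 : Real.Gamma (α + 1) = α * Real.Gamma α := Real.Gamma_add_one hα.ne'
    have hG2 : Real.Gamma (α + 2) = (α + 1) * (α * Real.Gamma α) := by
      have : α + 2 = (α + 1) + 1 := by ring
      rw [this, Real.Gamma_add_one (by linarith), hG1]
    rw [hG1, hG2]
    have hGpos : 0 < Real.Gamma α := Real.Gamma_pos_of_pos hα
    field_simp
    ring
  rw [Finset.sum_congr rfl hpiece, Finset.sum_add_distrib, ← Finset.mul_sum, ← Finset.mul_sum]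
end

section
/- Let h > 0 and let i be a natural number. Let T_i be the i-th right-handed triangular function of step h. Then for every t ≥ 0, the first-order integral of T_i satisfies exactly: ∫₀ᵗ T_i(τ) dτ = 0 for t ≤ i·h, = (t − i·h)²/(2h) for i·h ≤ t ≤ (i+1)·h, and = h/2 for t ≥ (i+1)·h. In particular, at every grid node t = j·h one has ∫₀^{j·h} T_i(τ) dτ = h/2 if j ≥ i+1 and 0 if j ≤ i, which are the entries of the operational matrices P_{1ts} and P_{1tt} of Equation (10). -/
open MeasureTheory Real

lemma tf_eq_indicator (h : ℝ) (i : ℕ) :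
    tf h i = Set.indicator (Set.Ico ((i:ℝ)*h) (((i:ℝ)+1)*h)) (fun t => (t - (i:ℝ)*h)/h) := by
  ext t
  simp [tf, Set.indicator, Set.mem_Ico]

lemma tf_intInt (h : ℝ) (i : ℕ) (a b : ℝ) : IntervalIntegrable (tf h i) volume a b := by
  rw [tf_eq_indicator]
  apply IntervalIntegrable.mono_fun' (g := fun t => (|t| + |(i:ℝ)*h|)/|h|)
  · apply IntervalIntegrable.div_const
    exact ((continuous_abs.add continuous_const).intervalIntegrable a b)
  · apply Measurable.aestronglyMeasurable
    exact (measurable_id.sub measurable_const).div_const _ |>.indicator measurableSet_Ico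
  · filter_upwards with t
    by_cases ht : t ∈ Set.Ico ((i:ℝ)*h) (((i:ℝ)+1)*h) <;> simp [ht, abs_div]
    · gcongr
      simpa [abs_mul] using (abs_sub t ((i:ℝ)*h))
    · positivity

lemma int_left (h : ℝ) (hh : 0 < h) (i : ℕ) (t : ℝ) (h0 : 0 ≤ t) (ht : t ≤ (i:ℝ)*h) :
    (∫ τ in (0:ℝ)..t, tf h i τ) = 0 := by
  have key : (∫ τ in (0:ℝ)..t, tf h i τ) = ∫ τ in (0:ℝ)..t, (0:ℝ) := by
    apply intervalIntegral.integral_congr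
    intro τ hτ
    rw [Set.uIcc_of_le h0] at hτ
    unfold tf
    split_ifs with hc
    · have : τ = (i:ℝ)*h := le_antisymm (hτ.2.trans ht) hc.1
      simp [this]
    · rfl
  rw [key]; simp

lemma int_mid (h : ℝ) (hh : 0 < h) (i : ℕ) (t : ℝ)
    (h1 : (i:ℝ)*h ≤ t) (h2 : t ≤ ((i:ℝ)+1)*h) :
    (∫ τ in (0:ℝ)..t, tf h i τ) = (t - (i:ℝ)*h)^2 / (2*h) := by
  have ha0 : 0 ≤ (i:ℝ)*h := by positivity
  rw [← intervalIntegral.integral_add_adjacent_intervals (b := (i:ℝ)*h)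
    (tf_intInt h i _ _) (tf_intInt h i _ _)]
  rw [int_left h hh i _ ha0 le_rfl, zero_add]
  have : (∫ τ in ((i:ℝ)*h)..t, tf h i τ) = ∫ τ in ((i:ℝ)*h)..t, (τ - (i:ℝ)*h)/h := by
    apply intervalIntegral.integral_congr_ae
    have hb : ∀ᵐ x : ℝ, x ≠ ((i:ℝ)+1)*h := by
      rw [ae_iff]; simp
    filter_upwards [hb] with x hx hmem
    rw [Set.uIoc_of_le h1] at hmem
    have : x < ((i:ℝ)+1)*h := lt_of_le_of_ne (hmem.2.trans h2) hx
    simp [tf, hmem.1.le, this]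
  rw [this, intervalIntegral.integral_div]
  have : (∫ τ in ((i:ℝ)*h)..t, (τ - (i:ℝ)*h)) = (t - (i:ℝ)*h)^2/2 := by
    rw [intervalIntegral.integral_comp_sub_right (fun x => x) ((i:ℝ)*h)]
    rw [integral_id]
    ring
  rw [this]
  ring

lemma int_right (h : ℝ) (hh : 0 < h) (i : ℕ) (t : ℝ) (ht : ((i:ℝ)+1)*h ≤ t) :
    (∫ τ in (0:ℝ)..t, tf h i τ) = h/2 := by
  rw [← intervalIntegral.integral_add_adjacent_intervals (b := ((i:ℝ)+1)*h)
    (tf_intInt h i _ _) (tf_intInt h i _ _)]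
  rw [int_mid h hh i _ (by nlinarith) le_rfl]
  have : (∫ τ in (((i:ℝ)+1)*h)..t, tf h i τ) = ∫ τ in (((i:ℝ)+1)*h)..t, (0:ℝ) := by
    apply intervalIntegral.integral_congr
    intro τ hτ
    rw [Set.uIcc_of_le ht] at hτ
    simp [tf, not_lt.mpr hτ.1]
  rw [this]
  simp
  field_simp
  ring

/-- First-order integral of the triangular function `T_i`, piecewise and at grid nodes:
the entries of the operational matrices `P_{1ts}` and `P_{1tt}`. -/
theorem integral_tf (h : ℝ) (hh : 0 < h) (i : ℕ) :
    (∀ t : ℝ, 0 ≤ t → t ≤ (i : ℝ) * h → (∫ τ in (0:ℝ)..t, tf h i τ) = 0) ∧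
    (∀ t : ℝ, (i : ℝ) * h ≤ t → t ≤ ((i : ℝ) + 1) * h →
      (∫ τ in (0:ℝ)..t, tf h i τ) = (t - (i : ℝ) * h) ^ 2 / (2 * h)) ∧
    (∀ t : ℝ, ((i : ℝ) + 1) * h ≤ t → (∫ τ in (0:ℝ)..t, tf h i τ) = h / 2) ∧
    (∀ j : ℕ, i + 1 ≤ j → (∫ τ in (0:ℝ)..((j : ℝ) * h), tf h i τ) = h / 2) ∧
    (∀ j : ℕ, j ≤ i → (∫ τ in (0:ℝ)..((j : ℝ) * h), tf h i τ) = 0) := by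
  refine ⟨int_left h hh i, int_mid h hh i, int_right h hh i, fun j hj => ?_, fun j hj => ?_⟩
  · apply int_right h hh i
    have : ((i:ℝ)+1) ≤ (j:ℝ) := by exact_mod_cast hj
    nlinarith
  · apply int_left h hh i _ (by positivity)
    have : (j:ℝ) ≤ (i:ℝ) := by exact_mod_cast hj
    nlinarith
end

section
/- Let α > 0 and h > 0. Then the Riemann–Liouville fractional integral of order α of the 0-th right-handed triangular function T_0 of step h satisfies, for every integer j ≥ 1, J^α T_0(j·h) = (h^α/Γ(α+2))·(j^{α+1} − (j−1)^α·(j+α)), and J^α T_0(0) = 0. (This is formula (A20) in the proof of Theorem 3.2.) -/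
open MeasureTheory Real

/-- Formula (A20): nodal values of the fractional integral of the `0`-th TF. -/
theorem rlInt_tf_zero_node (α h : ℝ) (hα : 0 < α) (hh : 0 < h) :
    (∀ j : ℕ, 1 ≤ j →
      rlInt α (tf h 0) ((j : ℝ) * h) =
        h ^ α / Real.Gamma (α + 2) *
          ((j : ℝ) ^ (α + 1) - ((j : ℝ) - 1) ^ α * ((j : ℝ) + α))) ∧
    rlInt α (tf h 0) 0 = 0 := by
  have hαm1 : (-1:ℝ) < α - 1 := by linarith
  have hα' : (-1:ℝ) < α := by linarith
  have hα1 : (0:ℝ) < α + 1 := by linarith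
  have hpow : ∀ x : ℝ, 0 ≤ x → x ^ (α + 1) = x ^ α * x := by
    intro x hx
    rcases eq_or_lt_of_le hx with h0 | h0
    · rw [← h0, Real.zero_rpow (ne_of_gt hα1), Real.zero_rpow hα.ne']; ring
    · rw [Real.rpow_add_one h0.ne']
  constructor
  · intro j hj
    have hjR : (1:ℝ) ≤ (j:ℝ) := by exact_mod_cast hj
    have hj0 : (0:ℝ) < (j:ℝ) := by linarith
    set t : ℝ := (j:ℝ) * h with ht
    have hht : h ≤ t := by rw [ht]; nlinarith
    have ht0 : 0 < t := lt_of_lt_of_le hh hht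
    -- integrability of the power kernels on [0, h]
    have hint : ∀ p : ℝ, -1 < p → IntervalIntegrable (fun τ => (t - τ) ^ p) volume 0 h := by
      intro p hp
      have := (intervalIntegral.intervalIntegrable_rpow' hp (a := t) (b := t - h)).comp_sub_left t
      simpa using this
    have hval : ∀ p : ℝ, -1 < p →
        (∫ τ in (0:ℝ)..h, (t - τ) ^ p) = (t ^ (p+1) - (t-h) ^ (p+1)) / (p+1) := by
      intro p hp
      rw [intervalIntegral.integral_comp_sub_left (fun u => u ^ p) t,
        integral_rpow (Or.inl hp)]
      simp
    have hne : ∀ᵐ τ ∂(volume : Measure ℝ), τ ≠ h := by simp [ae_iff]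
    -- the integrand vanishes on [h, t]
    have hfz : ∀ τ : ℝ, h ≤ τ → (t - τ) ^ (α - 1) * tf h 0 τ = 0 := by
      intro τ hτ
      simp only [tf, Nat.cast_zero, zero_mul, zero_add, one_mul]
      rw [if_neg]
      · ring
      · rintro ⟨-, h2⟩; linarith
    have hzero : ∫ τ in h..t, (t - τ) ^ (α - 1) * tf h 0 τ = 0 := by
      rw [intervalIntegral.integral_congr (g := fun _ => (0:ℝ))
        (fun τ hτ => hfz τ (by rcases Set.mem_uIcc.mp hτ with h1 | h1
                               · exact h1.1
                               · exact le_trans hht h1.1))]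
      simp
    have hintz : IntervalIntegrable (fun τ => (t - τ) ^ (α - 1) * tf h 0 τ) volume h t := by
      apply (intervalIntegrable_const (c := (0:ℝ))).congr_ae
      filter_upwards [ae_restrict_mem measurableSet_uIoc] with τ hτ
      have : h ≤ τ := by
        rcases Set.mem_uIoc.mp hτ with h1 | h1
        · exact h1.1.le
        · exact le_trans hht h1.1.le
      exact (hfz τ this).symm
    -- a.e. equality with the smooth integrand on [0, h]
    have hg : IntervalIntegrable (fun τ => (t - τ) ^ (α - 1) * (τ / h)) volume 0 h :=
      (hint (α - 1) hαm1).mul_continuousOn (by fun_prop)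
    have haeq : (fun τ => (t - τ) ^ (α - 1) * (τ / h))
        =ᵐ[volume.restrict (Set.uIoc (0:ℝ) h)] (fun τ => (t - τ) ^ (α - 1) * tf h 0 τ) := by
      filter_upwards [ae_restrict_mem measurableSet_uIoc, ae_restrict_of_ae hne] with τ hτ hτh
      rcases Set.mem_uIoc.mp hτ with h1 | h1
      · have hτlt : τ < h := lt_of_le_of_ne h1.2 hτh
        simp only [tf, Nat.cast_zero, zero_mul, zero_add, one_mul]
        rw [if_pos ⟨h1.1.le, hτlt⟩]
        ring
      · exact absurd h1.2 (not_le.mpr (lt_trans hh h1.1))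
    have hint1 : IntervalIntegrable (fun τ => (t - τ) ^ (α - 1) * tf h 0 τ) volume 0 h :=
      hg.congr_ae haeq
    -- main computation
    have key : (∫ τ in (0:ℝ)..t, (t - τ) ^ (α - 1) * tf h 0 τ)
        = (t/h) * ((t ^ α - (t-h) ^ α) / α) - (1/h) * ((t ^ (α+1) - (t-h) ^ (α+1)) / (α+1)) := by
      rw [← intervalIntegral.integral_add_adjacent_intervals hint1 hintz, hzero, add_zero,
        ← intervalIntegral.integral_congr_ae (MeasureTheory.ae_restrict_iff'
            measurableSet_uIoc |>.mp haeq)]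
      have : (∫ τ in (0:ℝ)..h, (t - τ) ^ (α - 1) * (τ / h))
          = ∫ τ in (0:ℝ)..h, ((t/h) * (t - τ) ^ (α - 1) - (1/h) * (t - τ) ^ α) := by
        apply intervalIntegral.integral_congr
        intro τ hτ
        rw [Set.uIcc_of_le hh.le] at hτ
        rcases eq_or_lt_of_le (le_trans hτ.2 hht) with h0 | h0
        · have h1 : t - τ = 0 := by rw [← h0]; ring
          dsimp only
          rw [h1, Real.zero_rpow hα.ne', h0]
          ring
        · have hpos : (0:ℝ) < t - τ := by linarith
          have e : (t - τ) ^ α = (t - τ) ^ (α - 1) * (t - τ) := by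
            rw [← Real.rpow_add_one hpos.ne' (α - 1)]
            norm_num
          dsimp only
          rw [e]
          ring
      rw [this, intervalIntegral.integral_sub ((hint (α-1) hαm1).const_mul _)
        ((hint α hα').const_mul _), intervalIntegral.integral_const_mul,
        intervalIntegral.integral_const_mul, hval (α-1) hαm1, hval α hα']
      ring_nf
    -- final algebra
    have hG : Real.Gamma (α + 2) = (α + 1) * α * Real.Gamma α := by
      rw [show α + 2 = (α + 1) + 1 by ring, Real.Gamma_add_one (ne_of_gt hα1),
        Real.Gamma_add_one hα.ne']
      ring
    have hGne : Real.Gamma α ≠ 0 := (Real.Gamma_pos_of_pos hα).ne'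
    have hj1 : (0:ℝ) ≤ (j:ℝ) - 1 := by linarith
    have e1 : t ^ α = (j:ℝ) ^ α * h ^ α := by
      rw [ht, Real.mul_rpow hj0.le hh.le]
    have e2 : (t - h) ^ α = ((j:ℝ) - 1) ^ α * h ^ α := by
      rw [show t - h = ((j:ℝ) - 1) * h by rw [ht]; ring, Real.mul_rpow hj1 hh.le]
    have e3 : t ^ (α+1) = (j:ℝ) ^ α * (j:ℝ) * (h ^ α * h) := by
      rw [ht, Real.mul_rpow hj0.le hh.le, hpow _ hj0.le, hpow _ hh.le]
    have e4 : (t - h) ^ (α+1) = ((j:ℝ) - 1) ^ α * ((j:ℝ) - 1) * (h ^ α * h) := by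
      rw [show t - h = ((j:ℝ) - 1) * h by rw [ht]; ring, Real.mul_rpow hj1 hh.le,
        hpow _ hj1, hpow _ hh.le]
    rw [rlInt, key, hG, e1, e2, e3, e4, hpow _ hj0.le, ht]
    field_simp
    ring
  · simp [rlInt]
end

section
/- Let α > 0, h > 0, m a positive integer, and let c_0, …, c_{m−1} be real numbers. Let f = Σ_{i=0}^{m−1} c_i·S_i be the step function of step h with values c_i on the subintervals [i·h, (i+1)·h), extended by 0 beyond m·h. Then for every integer j with 1 ≤ j ≤ m, J^α f(j·h) = (h^α/Γ(α+1)) · Σ_{i=0}^{j−1} c_i · ((j−i)^α − (j−i−1)^α). In particular, the vector of nodal values (J^α f(j·h))_{j} equals the vector of coefficients c multiplied by the one-shot operational matrix P_{αss} = (h^α/Γ(α+1))·⟦0 ς_1 … ς_{m−1}⟧ with ς_k = k^α − (k−1)^α. -/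
open MeasureTheory Real

/-- The upper-triangular Toeplitz matrix `⟦a_0 a_1 … a_{m−1}⟧` whose `(i,j)` entry is
`a_{j−i}` for `j ≥ i` and `0` for `j < i`. -/
def toeplitz (m : ℕ) (a : ℕ → ℝ) : Matrix (Fin m) (Fin m) ℝ :=
  fun i j => if (i : ℕ) ≤ (j : ℕ) then a ((j : ℕ) - (i : ℕ)) else 0

/-- Nodal values of the fractional integral of a step function
`f = Σ_{i<m} c_i·S_i`, and the resulting matrix form: the vector of nodal values
equals the coefficient vector multiplied by the one-shot matrix `P_{αss}`. -/
theorem rlInt_step_node (α h : ℝ) (hα : 0 < α) (hh : 0 < h) (m : ℕ) (hm : 0 < m)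
    (c : ℕ → ℝ) (f : ℝ → ℝ)
    (hf : ∀ t : ℝ, f t = ∑ i ∈ Finset.range m, c i * shf h i t) :
    (∀ j : ℕ, 1 ≤ j → j ≤ m →
      rlInt α f ((j : ℝ) * h) =
        h ^ α / Real.Gamma (α + 1) *
          ∑ i ∈ Finset.range j, c i * (((j : ℝ) - i) ^ α - ((j : ℝ) - i - 1) ^ α)) ∧
    (∀ j : Fin m,
      Matrix.vecMul (fun i : Fin m => c (i : ℕ))
          ((h ^ α / Real.Gamma (α + 1)) •
            toeplitz m (fun k => if k = 0 then 0 else (k : ℝ) ^ α - ((k : ℝ) - 1) ^ α)) j =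
        rlInt α f (((j : ℕ) : ℝ) * h)) := by
  have hΓ : Real.Gamma (α + 1) = α * Real.Gamma α := Real.Gamma_add_one (ne_of_gt hα)
  have hΓpos : 0 < Real.Gamma α := Real.Gamma_pos_of_pos hα
  -- value of `f` on the open subinterval
  have hfval : ∀ k : ℕ, k < m → ∀ τ : ℝ,
      τ ∈ Set.Ioo ((k:ℝ)*h) (((k:ℝ)+1)*h) → f τ = c k := by
    intro k hk τ hτ
    rw [hf]
    have hterm : ∀ i ∈ Finset.range m, c i * shf h i τ
        = if i = k then c k else 0 := by
      intro i _
      by_cases hik : i = k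
      · subst hik; simp [shf, le_of_lt hτ.1, hτ.2]
      · have hz : shf h i τ = 0 := by
          unfold shf
          rw [if_neg]
          rintro ⟨h1, h2⟩
          rcases lt_or_gt_of_ne hik with hlt | hgt
          · have : ((i:ℝ)+1) * h ≤ (k:ℝ)*h := by
              apply mul_le_mul_of_nonneg_right _ hh.le
              have : (i:ℕ) + 1 ≤ k := Nat.succ_le_of_lt hlt
              exact_mod_cast this
            linarith [hτ.1]
          · have : ((k:ℝ)+1) * h ≤ (i:ℝ)*h := by
              apply mul_le_mul_of_nonneg_right _ hh.le
              have : (k:ℕ) + 1 ≤ i := Nat.succ_le_of_lt hgt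
              exact_mod_cast this
            linarith [hτ.2]
        simp [hz, hik]
    rw [Finset.sum_congr rfl hterm, Finset.sum_ite_eq' (Finset.range m) k]
    simp [Finset.mem_range.mpr hk]
  have key : ∀ j : ℕ, 1 ≤ j → j ≤ m →
      rlInt α f ((j : ℝ) * h) =
        h ^ α / Real.Gamma (α + 1) *
          ∑ i ∈ Finset.range j, c i * (((j : ℝ) - i) ^ α - ((j : ℝ) - i - 1) ^ α) := by
    intro j hj1 hjm
    set T : ℝ := (j:ℝ) * h with hT
    set G : ℝ → ℝ := fun τ => (T - τ) ^ (α-1) * f τ with hG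
    have hrm1 : (-1:ℝ) < α - 1 := by linarith
    -- ae equality with constants on each subinterval
    have haeIoc : ∀ k : ℕ, k < j →
        (∀ᵐ (τ:ℝ) ∂volume, τ ∈ Set.uIoc ((k:ℝ)*h) (((k:ℝ)+1)*h) →
          G τ = (T - τ) ^ (α-1) * c k) := by
      intro k hk
      have hle : (k:ℝ)*h ≤ ((k:ℝ)+1)*h := by nlinarith
      have hne : ∀ᵐ (τ:ℝ) ∂volume, τ ≠ ((k:ℝ)+1)*h := by
        rw [ae_iff]
        simpa using Real.volume_singleton
      filter_upwards [hne] with τ hτne hτ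
      rw [Set.uIoc_of_le hle] at hτ
      have : f τ = c k :=
        hfval k (lt_of_lt_of_le hk hjm) τ ⟨hτ.1, lt_of_le_of_ne hτ.2 hτne⟩
      simp [hG, this]
    -- integrability of the power factor
    have hg : ∀ a b : ℝ, IntervalIntegrable (fun τ => (T - τ) ^ (α-1)) volume a b := by
      intro a b
      have := (intervalIntegral.intervalIntegrable_rpow' (a := T - a) (b := T - b) hrm1).comp_sub_left T
      simpa using this
    have hint : ∀ k : ℕ, k < j →
        IntervalIntegrable G volume ((fun n : ℕ => (n:ℝ)*h) k) ((fun n : ℕ => (n:ℝ)*h) (k+1)) := by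
      intro k hk
      have hbase : IntervalIntegrable (fun τ => (T - τ) ^ (α-1) * c k) volume
          ((k:ℝ)*h) (((k:ℝ)+1)*h) := (hg _ _).mul_const _
      have : IntervalIntegrable G volume ((k:ℝ)*h) (((k:ℝ)+1)*h) := by
        refine hbase.congr_ae ?_
        have := haeIoc k hk
        refine (ae_restrict_iff' (measurableSet_uIoc (a := (k:ℝ)*h) (b := ((k:ℝ)+1)*h))).2 ?_
        filter_upwards [this] with τ hτ hmem
        exact (hτ hmem).symm
      have hcast : ((k+1 : ℕ) : ℝ) * h = ((k:ℝ)+1)*h := by push_cast; ring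
      simpa [hcast] using this
    -- split the integral
    have hsplit : (∫ τ in (0:ℝ)..T, G τ)
        = ∑ k ∈ Finset.range j, ∫ τ in ((k:ℝ)*h)..(((k:ℝ)+1)*h), G τ := by
      have := intervalIntegral.sum_integral_adjacent_intervals (μ := volume)
        (a := fun n : ℕ => (n:ℝ)*h) (n := j) (f := G) hint
      simp only [Nat.cast_zero, zero_mul] at this
      rw [← this]
      refine Finset.sum_congr rfl ?_
      intro k _
      have hcast : ((k+1 : ℕ) : ℝ) * h = ((k:ℝ)+1)*h := by push_cast; ring
      rw [hcast]
    -- compute each piece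
    have hpiece : ∀ k ∈ Finset.range j,
        (∫ τ in ((k:ℝ)*h)..(((k:ℝ)+1)*h), G τ)
          = c k * ((((j:ℝ) - k) ^ α - ((j:ℝ) - k - 1) ^ α) * h ^ α / α) := by
      intro k hk
      rw [Finset.mem_range] at hk
      have h1 : (∫ τ in ((k:ℝ)*h)..(((k:ℝ)+1)*h), G τ)
          = ∫ τ in ((k:ℝ)*h)..(((k:ℝ)+1)*h), (T - τ) ^ (α-1) * c k :=
        intervalIntegral.integral_congr_ae (haeIoc k hk)
      rw [h1, intervalIntegral.integral_mul_const]
      have h2 : (∫ τ in ((k:ℝ)*h)..(((k:ℝ)+1)*h), (T - τ) ^ (α-1))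
          = ∫ x in (T - ((k:ℝ)+1)*h)..(T - (k:ℝ)*h), x ^ (α-1) :=
        intervalIntegral.integral_comp_sub_left (fun x => x ^ (α-1)) T
      rw [h2, integral_rpow (Or.inl hrm1)]
      have e1 : T - ((k:ℝ)+1)*h = ((j:ℝ) - k - 1) * h := by rw [hT]; ring
      have e2 : T - (k:ℝ)*h = ((j:ℝ) - k) * h := by rw [hT]; ring
      have hk1 : (1:ℝ) ≤ (j:ℝ) - k := by
        have : (k:ℕ) + 1 ≤ j := hk
        have : ((k:ℝ)) + 1 ≤ (j:ℝ) := by exact_mod_cast this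
        linarith
      have e3 : (((j:ℝ) - k) * h) ^ α = ((j:ℝ) - k) ^ α * h ^ α :=
        Real.mul_rpow (by linarith) hh.le
      have e4 : (((j:ℝ) - k - 1) * h) ^ α = ((j:ℝ) - k - 1) ^ α * h ^ α :=
        Real.mul_rpow (by linarith) hh.le
      rw [e1, e2]
      have : α - 1 + 1 = α := by ring
      rw [this, e3, e4]
      ring
    rw [rlInt,
      show (∫ τ in (0:ℝ)..((j:ℝ)*h), ((j:ℝ)*h - τ) ^ (α-1) * f τ) = ∫ τ in (0:ℝ)..T, G τ from rfl,
      hsplit, Finset.sum_congr rfl hpiece, hΓ, Finset.mul_sum, Finset.mul_sum]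
    refine Finset.sum_congr rfl fun k _ => ?_
    field_simp
  refine ⟨key, ?_⟩
  intro j
  simp only [Matrix.vecMul, dotProduct, Matrix.smul_apply, toeplitz, smul_eq_mul]
  rcases Nat.eq_zero_or_pos (j:ℕ) with hj0 | hjpos
  · rw [hj0]
    have : rlInt α f (((0:ℕ):ℝ) * h) = 0 := by
      simp [rlInt]
    rw [this]
    refine Finset.sum_eq_zero fun i _ => ?_
    rcases Nat.eq_zero_or_pos (i:ℕ) with hi0 | hip
    · simp [hj0, hi0]
    · have : ¬ ((i:ℕ) ≤ (j:ℕ)) := by omega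
      simp [this]
  · rw [key (j:ℕ) hjpos j.isLt.le]
    rw [Finset.mul_sum]
    rw [Fin.sum_univ_eq_sum_range (fun i => c i *
        (h ^ α / Real.Gamma (α + 1) *
          (if i ≤ (j:ℕ) then
            (if (j:ℕ) - i = 0 then 0
             else (((j:ℕ) - i : ℕ):ℝ) ^ α - ((((j:ℕ) - i : ℕ):ℝ) - 1) ^ α)
           else 0))) m]
    rw [← Finset.sum_subset (Finset.range_subset_range.2 j.isLt.le) (fun i _ hi => by
      rw [Finset.mem_range, not_lt] at hi
      rcases eq_or_lt_of_le hi with hij | hij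
      · simp [← hij]
      · have : ¬ (i ≤ (j:ℕ)) := by omega
        simp [this])]
    refine Finset.sum_congr rfl fun i hi => ?_
    rw [Finset.mem_range] at hi
    have h1 : i ≤ (j:ℕ) := hi.le
    have h2 : (j:ℕ) - i ≠ 0 := by omega
    have h3 : (((j:ℕ) - i : ℕ):ℝ) = ((j:ℕ):ℝ) - (i:ℝ) := by
      push_cast [Nat.cast_sub hi.le]; ring
    rw [if_pos h1, if_neg h2, h3]
    ring
end
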